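/- arXiv:1310.2783 — 2 statements merged into one kernel-verified Lean document; each statement's English description precedes it below -/
import Mathlib

section
/- For every triple of positive integers k, ℓ, r with k ≥ r ≥ 3 and ℓ ≤ C(r,2)·⌈k/r⌉² / ⌊k/r⌋ (where C(r,2) denotes the binomial coefficient r choose 2), there exists a positive integer N = N(k,ℓ,r) such that for every integer n ≥ N, rx_{k,ℓ}(K_{r×n}) = k or rx_{k,ℓ}(K_{r×n}) = k + 1. -/
open SimpleGraph

/-- `T` is a rainbow `S`-tree in `G` under edge-coloring `c`:
its vertices contain `S`, it is a tree, and `c` is injective on its edges. -/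
def IsRainbowSTree {V β : Type*} (G : SimpleGraph V) (c : Sym2 V → β)
    (S : Set V) (T : G.Subgraph) : Prop :=
  S ⊆ T.verts ∧ T.coe.IsTree ∧ Set.InjOn c T.edgeSet

/-- A family of `S`-trees is internally disjoint: pairwise edge-disjoint, and
the vertex sets of two distinct members meet exactly in `S`. -/
def InternallyDisjoint {V : Type*} {G : SimpleGraph V} (S : Set V)
    {ι : Type*} (T : ι → G.Subgraph) : Prop :=
  ∀ i j, i ≠ j → (T i).edgeSet ∩ (T j).edgeSet = ∅ ∧ (T i).verts ∩ (T j).verts = S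

/-- The coloring `c` provides, for every set `S` of `k` vertices,
`ℓ` internally disjoint rainbow `S`-trees. -/
def HasRainbowSTrees {V β : Type*} (G : SimpleGraph V) (c : Sym2 V → β) (k ℓ : ℕ) : Prop :=
  ∀ S : Finset V, S.card = k →
    ∃ T : Fin ℓ → G.Subgraph,
      (∀ i, IsRainbowSTree G c (S : Set V) (T i)) ∧ InternallyDisjoint (S : Set V) T

/-- The `(k,ℓ)`-rainbow index `rx_{k,ℓ}(G)`: the minimum number `t` of colors such that
some edge-coloring of `G` with `t` colors gives, for every `k`-set `S`,
`ℓ` internally disjoint rainbow `S`-trees. -/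
noncomputable def rainbowIndex {V : Type*} (G : SimpleGraph V) (k ℓ : ℕ) : ℕ :=
  sInf {t : ℕ | ∃ c : Sym2 V → Fin t, HasRainbowSTrees G c k ℓ}

namespace RxProof

lemma growth (C j a b : ℕ) (hab : a < b) :
    ∃ M : ℕ, ∀ m : ℕ, M ≤ m → C * (m + 1) ^ j * a ^ m < b ^ m := by
  rcases Nat.eq_zero_or_pos a with rfl | ha
  · refine ⟨1, fun m hm => ?_⟩
    rw [Nat.zero_pow (by omega), Nat.mul_zero]
    exact Nat.pow_pos (by omega)
  · refine ⟨2 ^ j * Nat.factorial (j+1) * C * a ^ (j+1) + 2*j + 2, fun m hm => ?_⟩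
    set D := 2 ^ j * Nat.factorial (j+1) * C * a ^ (j+1) with hD
    have hmj : j + 1 ≤ m := by omega
    -- step 5 : Nat.factorial (j+1) * (C * (m+1)^j * a^(j+1)) < (m-j)^(j+1)
    have h5 : Nat.factorial (j+1) * (C * (m + 1) ^ j * a ^ (j+1)) < (m - j) ^ (j+1) := by
      have h21 : (m + 1) ^ j ≤ 2 ^ j * (m - j) ^ j := by
        rw [← Nat.mul_pow]
        exact Nat.pow_le_pow_left (by omega) j
      have hDm : D < m - j := by omega
      calc Nat.factorial (j+1) * (C * (m + 1) ^ j * a ^ (j+1))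
          ≤ Nat.factorial (j+1) * (C * (2 ^ j * (m - j) ^ j) * a ^ (j+1)) := by
            apply Nat.mul_le_mul_left
            apply Nat.mul_le_mul_right
            exact Nat.mul_le_mul_left _ h21
        _ = D * (m - j) ^ j := by ring
        _ < (m - j) * (m - j) ^ j := by
            apply Nat.mul_lt_mul_of_lt_of_le hDm (le_refl _)
            exact Nat.pow_pos (by omega)
        _ = (m - j) ^ (j+1) := by ring
    -- step 4 : C * (m+1)^j * a^(j+1) < choose m (j+1)
    have h4 : C * (m + 1) ^ j * a ^ (j+1) < Nat.choose m (j+1) := by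
      have hdesc : (m - j) ^ (j+1) ≤ Nat.factorial (j+1) * Nat.choose m (j+1) := by
        have := Nat.pow_sub_le_descFactorial m (j+1)
        rw [Nat.descFactorial_eq_factorial_mul_choose] at this
        simpa [Nat.succ_sub_succ] using this
      have := lt_of_lt_of_le h5 hdesc
      exact Nat.lt_of_mul_lt_mul_left this
    -- step 3 : C * (m+1)^j * a^m < choose m (j+1) * a^(m - (j+1))
    have h3 : C * (m + 1) ^ j * a ^ m < Nat.choose m (j+1) * a ^ (m - (j+1)) := by
      have hsplit : a ^ m = a ^ (j+1) * a ^ (m - (j+1)) := by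
        rw [← pow_add]; congr 1; omega
      calc C * (m + 1) ^ j * a ^ m = (C * (m + 1) ^ j * a ^ (j+1)) * a ^ (m - (j+1)) := by
            rw [hsplit]; ring
        _ < Nat.choose m (j+1) * a ^ (m - (j+1)) :=
            Nat.mul_lt_mul_of_lt_of_le h4 (le_refl _) (Nat.pow_pos ha)
    -- step 2 : choose m (j+1) * a^(m-(j+1)) ≤ (a+1)^m
    have h2 : Nat.choose m (j+1) * a ^ (m - (j+1)) ≤ (a + 1) ^ m := by
      rw [add_pow a 1 m]
      have hmem : m - (j+1) ∈ Finset.range (m+1) := by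
        simp
      have hterm := Finset.single_le_sum
        (f := fun i => a ^ i * 1 ^ (m - i) * Nat.choose m i)
        (fun i _ => Nat.zero_le _) hmem
      calc Nat.choose m (j+1) * a ^ (m - (j+1))
          = a ^ (m - (j+1)) * 1 ^ (m - (m - (j+1))) * Nat.choose m (m - (j+1)) := by
            rw [Nat.choose_symm hmj]; ring
        _ ≤ _ := hterm
    have h1 : (a + 1) ^ m ≤ b ^ m := Nat.pow_le_pow_left (by omega) m
    omega


section Count

variable {U : Type*} [Fintype U] [DecidableEq U] {α : Type*} [Fintype α] [DecidableEq α]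

/-- Counting colorings which are "bad" (non-rainbow) on every member of a disjoint family of
edge-sets: exact product formula. -/
lemma count_bad {m e : ℕ} (F : Fin m → Finset U)
    (hd : ∀ i j, i ≠ j → Disjoint (F i) (F j)) (hc : ∀ i, (F i).card = e) :
    Nat.card {c : U → α // ∀ i, ¬ Set.InjOn c (F i)} * (Fintype.card α ^ e) ^ m
      = (Fintype.card α ^ e - (Fintype.card α).descFactorial e) ^ m
          * Fintype.card α ^ Fintype.card U := by
  classical
  -- the fiber map
  let g : U → Option (Fin m) := fun x => if h : ∃ i, x ∈ F i then some h.choose else none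
  have hg1 : ∀ {x : U} {i : Fin m}, x ∈ F i → g x = some i := by
    intro x i hx
    have h : ∃ i, x ∈ F i := ⟨i, hx⟩
    simp only [g, dif_pos h]
    congr 1
    by_contra hne
    exact (Finset.disjoint_left.mp (hd _ _ hne) h.choose_spec) hx
  have hg2 : ∀ {x : U} {i : Fin m}, g x = some i → x ∈ F i := by
    intro x i hgx
    by_cases h : ∃ i, x ∈ F i
    · have : g x = some h.choose := by simp only [g, dif_pos h]
      rw [this] at hgx
      obtain rfl : h.choose = i := Option.some_inj.mp hgx
      exact h.choose_spec
    · simp only [g, dif_neg h] at hgx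
      cases hgx
  -- equivalence of fibers with the finsets
  have efib : ∀ i : Fin m, {x : U // g x = some i} ≃ {x : U // x ∈ F i} :=
    fun i => Equiv.subtypeEquivRight (fun x => ⟨fun h => hg2 h, fun h => hg1 h⟩)
  -- the main equivalence
  let eFun : (U → α) ≃ ∀ j : Option (Fin m), ({x : U // g x = j} → α) :=
    ((Equiv.sigmaFiberEquiv g).arrowCongr (Equiv.refl α)).symm.trans
      (Equiv.piCurry fun _ _ => α)
  have eFun_apply : ∀ (c : U → α) (j : Option (Fin m)) (x : {x : U // g x = j}),
      eFun c j x = c x.val := fun c j x => rfl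
  -- the predicate on components
  let P : ∀ j : Option (Fin m), ({x : U // g x = j} → α) → Prop := fun j =>
    Option.rec (fun _ => True) (fun _ f => ¬ Function.Injective f) j
  have key : ∀ c : U → α, (∀ i, ¬ Set.InjOn c (F i)) ↔ (∀ j, P j (eFun c j)) := by
    intro c
    constructor
    · rintro h (_ | i)
      · trivial
      · intro hinj
        refine h i ?_
        rw [Set.injOn_iff_injective]
        intro x y hxy
        have hxy2 : (⟨x.val, hg1 (by simpa using x.property)⟩ : {x : U // g x = some i})
            = ⟨y.val, hg1 (by simpa using y.property)⟩ := hinj hxy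
        have hval : x.val = y.val := congrArg (fun z : {x : U // g x = some i} => z.val) hxy2
        exact Subtype.ext hval
    · intro h i hinj
      refine h (some i) ?_
      intro x y hxy
      have hx : x.val ∈ F i := hg2 x.property
      have hy : y.val ∈ F i := hg2 y.property
      exact Subtype.ext (hinj (by simpa using hx) (by simpa using hy) hxy)
  -- the three card computations
  have card1 : Nat.card {c : U → α // ∀ i, ¬ Set.InjOn c (F i)}
      = ∏ j : Option (Fin m), Nat.card {f : ({x : U // g x = j} → α) // P j f} := by
    rw [Nat.card_congr ((Equiv.subtypeEquiv eFun key).trans Equiv.subtypePiEquivPi)]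
    rw [Nat.card_pi]
  have cardfib : ∀ i : Fin m, Nat.card {x : U // g x = some i} = e := by
    intro i
    rw [Nat.card_congr (efib i)]
    simp [Nat.card_eq_fintype_card, Fintype.card_coe, hc i]
  have cardsome : ∀ i : Fin m,
      Nat.card {f : ({x : U // g x = some i} → α) // P (some i) f}
        = Fintype.card α ^ e - (Fintype.card α).descFactorial e := by
    intro i
    have : P (some i) = fun f : ({x : U // g x = some i} → α) => ¬ Function.Injective f := rfl
    rw [this]
    rw [Nat.card_eq_fintype_card]
    rw [Fintype.card_subtype_compl]
    congr 1
    · rw [Fintype.card_fun]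
      congr 1
      rw [← Nat.card_eq_fintype_card, cardfib i]
    · rw [Fintype.card_congr (Equiv.subtypeInjectiveEquivEmbedding _ _),
        Fintype.card_embedding_eq]
      congr 1
      rw [← Nat.card_eq_fintype_card, cardfib i]
  have cardnone : Nat.card {f : ({x : U // g x = none} → α) // P none f}
      = Fintype.card α ^ Nat.card {x : U // g x = none} := by
    rw [Nat.card_congr (Equiv.subtypeUnivEquiv (fun _ => trivial))]
    rw [Nat.card_eq_fintype_card, Fintype.card_fun, Nat.card_eq_fintype_card]
  have cardU : Fintype.card α ^ Fintype.card U
      = Fintype.card α ^ Nat.card {x : U // g x = none} * (Fintype.card α ^ e) ^ m := by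
    have hU : Fintype.card U = Nat.card {x : U // g x = none} + m * e := by
      rw [← Fintype.card_congr (Equiv.sigmaFiberEquiv g)]
      rw [Fintype.card_sigma, Fintype.sum_option]
      congr 1
      · rw [Nat.card_eq_fintype_card]
      · rw [Finset.sum_congr rfl (fun i (_ : i ∈ Finset.univ) => by
          rw [← Nat.card_eq_fintype_card, cardfib i])]
        simp [mul_comm]
    rw [hU, pow_add, pow_mul]
    ring
  rw [card1, Fintype.prod_option]
  rw [Finset.prod_congr rfl (fun i _ => cardsome i), cardnone]
  simp only [Finset.prod_const, Finset.card_univ, Fintype.card_fin]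
  rw [cardU]
  ring

end Count


/-- A graph in which every vertex other than `a`, `b` has all its neighbours inside `{a, b}`
but is not adjacent to both `a` and `b` is acyclic. -/
lemma doubleStar_isAcyclic {W : Type*} {H : SimpleGraph W} {a b : W}
    (hx : ∀ x, x ≠ a → x ≠ b →
      (¬ (H.Adj x a ∧ H.Adj x b)) ∧ ∀ y, H.Adj x y → y = a ∨ y = b) :
    H.IsAcyclic := by
  classical
  intro v c hc
  -- find a vertex on the cycle different from a and b
  have h3 : 3 ≤ c.length := hc.three_le_length
  have hnd : c.support.tail.Nodup := hc.support_nodup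
  have hex : ∃ x ∈ c.support, x ≠ a ∧ x ≠ b := by
    by_contra hcon
    push_neg at hcon
    have hsub : c.support.tail.toFinset ⊆ ({a, b} : Finset W) := by
      intro x hxm
      have hxs : x ∈ c.support := List.mem_of_mem_tail (List.mem_toFinset.mp hxm)
      rcases Classical.em (x = a) with rfl | hne
      · simp
      · simp [hcon x hxs hne]
    have hlen : c.support.tail.length = c.length := by
      have := c.length_support
      have : c.support.tail.length = c.support.length - 1 := by simp
      omega
    have hcard : c.support.tail.toFinset.card = c.support.tail.length :=
      List.toFinset_card_of_nodup hnd
    have hle : c.support.tail.toFinset.card ≤ 2 := by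
      calc c.support.tail.toFinset.card ≤ ({a, b} : Finset W).card := Finset.card_le_card hsub
        _ ≤ 2 := Finset.card_insert_le _ _ |>.trans (by simp)
    omega
  obtain ⟨x, hxs, hxa, hxb⟩ := hex
  obtain ⟨hnotboth, hnbr⟩ := hx x hxa hxb
  -- rotate the cycle to start at x
  have hd : (c.rotate x hxs).IsCycle := hc.rotate hxs
  have hdlen : (c.rotate x hxs).length = c.length := by
    have := c.rotate_darts x hxs
    have := this.perm.length_eq
    simpa [Walk.length_darts] using this
  set d := c.rotate x hxs with hdd
  clear_value d
  cases d with
  | nil => exact hd.ne_nil rfl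
  | cons h' p =>
    rename_i y
    rw [Walk.cons_isCycle_iff] at hd
    obtain ⟨hp, -⟩ := hd
    have hplen : 2 ≤ p.length := by
      have : p.length + 1 = c.length := by simpa using hdlen
      omega
    have hq := hp.reverse
    have hqlen : 2 ≤ p.reverse.length := by rwa [Walk.length_reverse]
    set q := p.reverse with hqq
    clear_value q
    cases q with
    | nil => simp at hqlen
    | cons h'' q' =>
      rename_i z
      rw [Walk.cons_isPath_iff] at hq
      obtain ⟨hq', -⟩ := hq
      have hzy : z ≠ y := by
        rintro rfl
        rw [Walk.isPath_iff_eq_nil] at hq'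
        subst hq'
        simp at hqlen
      rcases hnbr y h' with rfl | rfl <;> rcases hnbr z h'' with rfl | rfl
      · exact hzy rfl
      · exact hnotboth ⟨h', h''⟩
      · exact hnotboth ⟨h'', h'⟩
      · exact hzy rfl

section Graph

variable {r n : ℕ}

abbrev MV (r n : ℕ) := (i : Fin r) × Fin n

/-- The edge set of the double star with hubs `⟨i0,u⟩, ⟨i1,u⟩` covering `S`. -/
def Eset (i0 i1 : Fin r) (S : Finset (MV r n)) (u : Fin n) : Finset (Sym2 (MV r n)) :=
  insert s((⟨i0, u⟩ : MV r n), (⟨i1, u⟩ : MV r n))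
    (S.image fun z => if z.1 = i0 then s((⟨i1, u⟩ : MV r n), z) else s((⟨i0, u⟩ : MV r n), z))

variable {i0 i1 : Fin r} {S : Finset (MV r n)} {u : Fin n}

lemma mem_Eset {e : Sym2 (MV r n)} :
    e ∈ Eset i0 i1 S u ↔ e = s((⟨i0, u⟩ : MV r n), (⟨i1, u⟩ : MV r n)) ∨
      ∃ z ∈ S, e = if z.1 = i0 then s((⟨i1, u⟩ : MV r n), z)
        else s((⟨i0, u⟩ : MV r n), z) := by
  rw [Eset, Finset.mem_insert, Finset.mem_image]
  apply or_congr Iff.rfl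
  constructor
  · rintro ⟨z, hz, h⟩; exact ⟨z, hz, h.symm⟩
  · rintro ⟨z, hz, h⟩; exact ⟨z, hz, h.symm⟩

lemma not_hub_mem (hu : ∀ z ∈ S, z.2 ≠ u) {i : Fin r} : (⟨i, u⟩ : MV r n) ∉ S :=
  fun h => hu _ h rfl

lemma ne_hub {z : MV r n} (hz : z ∈ S) (hu : ∀ z ∈ S, z.2 ≠ u) {i : Fin r} :
    z ≠ (⟨i, u⟩ : MV r n) := by
  intro h
  apply hu _ hz
  rw [h]

/-- Case analysis for adjacency via `Eset`. -/
lemma adj_cases (hu : ∀ z ∈ S, z.2 ≠ u) {x y : MV r n} (h : s(x, y) ∈ Eset i0 i1 S u) :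
    (x = ⟨i0, u⟩ ∧ y = ⟨i1, u⟩) ∨ (y = ⟨i0, u⟩ ∧ x = ⟨i1, u⟩) ∨
    (x = ⟨i1, u⟩ ∧ y ∈ S ∧ y.1 = i0) ∨ (y = ⟨i1, u⟩ ∧ x ∈ S ∧ x.1 = i0) ∨
    (x = ⟨i0, u⟩ ∧ y ∈ S ∧ y.1 ≠ i0) ∨ (y = ⟨i0, u⟩ ∧ x ∈ S ∧ x.1 ≠ i0) := by
  rw [mem_Eset] at h
  rcases h with h | ⟨z, hz, h⟩
  · rw [Sym2.eq_iff] at h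
    tauto
  · by_cases hzi : z.1 = i0
    · rw [if_pos hzi, Sym2.eq_iff] at h
      rcases h with ⟨rfl, rfl⟩ | ⟨rfl, rfl⟩ <;> tauto
    · rw [if_neg hzi, Sym2.eq_iff] at h
      rcases h with ⟨rfl, rfl⟩ | ⟨rfl, rfl⟩ <;> tauto

/-- Every edge of `Eset` has an endpoint among the two hubs. -/
lemma hub_mem_of_mem_Eset {e : Sym2 (MV r n)} (he : e ∈ Eset i0 i1 S u) :
    (⟨i0, u⟩ : MV r n) ∈ e ∨ (⟨i1, u⟩ : MV r n) ∈ e := by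
  rw [mem_Eset] at he
  rcases he with rfl | ⟨z, hz, he⟩
  · left; simp
  · by_cases hzi : z.1 = i0
    · rw [if_pos hzi] at he; right; simp [he]
    · rw [if_neg hzi] at he; left; simp [he]

/-- Every endpoint of an edge of `Eset` is a hub or lies in `S`. -/
lemma endpoint_mem_of_mem_Eset {e : Sym2 (MV r n)} (he : e ∈ Eset i0 i1 S u) {x : MV r n}
    (hx : x ∈ e) : x = (⟨i0, u⟩ : MV r n) ∨ x = (⟨i1, u⟩ : MV r n) ∨ x ∈ S := by
  rw [mem_Eset] at he
  rcases he with rfl | ⟨z, hz, he⟩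
  · rw [Sym2.mem_iff] at hx; tauto
  · by_cases hzi : z.1 = i0
    · rw [if_pos hzi] at he
      subst he
      rw [Sym2.mem_iff] at hx
      rcases hx with rfl | rfl <;> tauto
    · rw [if_neg hzi] at he
      subst he
      rw [Sym2.mem_iff] at hx
      rcases hx with rfl | rfl <;> tauto

lemma fst_eq_of_hub_eq {i j : Fin r} {w : Fin n} (h : (⟨i, u⟩ : MV r n) = ⟨j, w⟩) : i = j :=
  congrArg Sigma.fst h

lemma card_Eset (hi : i0 ≠ i1) (hu : ∀ z ∈ S, z.2 ≠ u) :
    (Eset i0 i1 S u).card = S.card + 1 := by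
  rw [Eset, Finset.card_insert_of_notMem, Finset.card_image_of_injOn]
  · intro z hz z' hz' hzz
    rw [Finset.mem_coe] at hz hz'
    dsimp only at hzz
    by_cases h1 : z.1 = i0 <;> by_cases h2 : z'.1 = i0
    · rw [if_pos h1, if_pos h2, Sym2.eq_iff] at hzz
      rcases hzz with ⟨-, h⟩ | ⟨h, h'⟩
      · exact h
      · exact absurd h' (ne_hub hz hu)
    · rw [if_pos h1, if_neg h2, Sym2.eq_iff] at hzz
      rcases hzz with ⟨h, -⟩ | ⟨h, -⟩
      · exact absurd (fst_eq_of_hub_eq h) (Ne.symm hi)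
      · exact absurd h.symm (ne_hub hz' hu)
    · rw [if_neg h1, if_pos h2, Sym2.eq_iff] at hzz
      rcases hzz with ⟨h, -⟩ | ⟨h, -⟩
      · exact absurd (fst_eq_of_hub_eq h) hi
      · exact absurd h.symm (ne_hub hz' hu)
    · rw [if_neg h1, if_neg h2, Sym2.eq_iff] at hzz
      rcases hzz with ⟨-, h⟩ | ⟨h, h'⟩
      · exact h
      · exact absurd h' (ne_hub hz hu)
  · intro hmem
    rw [Finset.mem_image] at hmem
    obtain ⟨z, hz, hzz⟩ := hmem
    by_cases h1 : z.1 = i0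
    · rw [if_pos h1, Sym2.eq_iff] at hzz
      rcases hzz with ⟨h, -⟩ | ⟨-, h⟩
      · exact absurd (fst_eq_of_hub_eq h) (Ne.symm hi)
      · exact (ne_hub hz hu) h
    · rw [if_neg h1, Sym2.eq_iff] at hzz
      rcases hzz with ⟨-, h⟩ | ⟨h, -⟩
      · exact (ne_hub hz hu) h
      · exact absurd (fst_eq_of_hub_eq h) hi

/-- The double-star subgraph. -/
def Tsub (i0 i1 : Fin r) (S : Finset (MV r n)) (u : Fin n) (hi : i0 ≠ i1)
    (hu : ∀ z ∈ S, z.2 ≠ u) : (completeMultipartiteGraph (fun _ : Fin r => Fin n)).Subgraph where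
  verts := ↑(insert (⟨i0, u⟩ : MV r n) (insert (⟨i1, u⟩ : MV r n) S))
  Adj x y := s(x, y) ∈ Eset i0 i1 S u
  adj_sub := by
    intro x y h
    simp only [comap_adj, top_adj]
    rcases adj_cases hu h with ⟨rfl, rfl⟩ | ⟨rfl, rfl⟩ | ⟨rfl, -, h⟩ | ⟨rfl, -, h⟩ |
      ⟨rfl, -, h⟩ | ⟨rfl, -, h⟩
    · exact hi
    · exact hi.symm
    · intro hc
      rw [h] at hc
      exact hi (hc.symm)
    · intro hc
      rw [h] at hc
      exact hi hc
    · exact fun hc => h hc.symm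
    · exact fun hc => h hc
  edge_vert := by
    intro x y h
    have := endpoint_mem_of_mem_Eset h (Sym2.mem_mk_left x y)
    simp only [Finset.coe_insert, Set.mem_insert_iff, Finset.mem_coe]
    tauto
  symm := by
    refine ⟨fun x y h => ?_⟩
    rwa [Sym2.eq_swap] at h

lemma verts_Tsub (hi : i0 ≠ i1) (hu : ∀ z ∈ S, z.2 ≠ u) : (Tsub i0 i1 S u hi hu).verts
    = ↑(insert (⟨i0, u⟩ : MV r n) (insert (⟨i1, u⟩ : MV r n) S)) := rfl

lemma edgeSet_Tsub (hi : i0 ≠ i1) (hu : ∀ z ∈ S, z.2 ≠ u) :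
    (Tsub i0 i1 S u hi hu).edgeSet = ↑(Eset i0 i1 S u) := by
  ext e
  induction e with
  | _ x y => simp only [Subgraph.mem_edgeSet, Finset.mem_coe]; exact Iff.rfl

lemma adj_Tsub_iff (hi : i0 ≠ i1) (hu : ∀ z ∈ S, z.2 ≠ u) {x y : MV r n} :
    (Tsub i0 i1 S u hi hu).Adj x y ↔ s(x, y) ∈ Eset i0 i1 S u :=
  Iff.rfl

lemma isTree_Tsub (hi : i0 ≠ i1) (hu : ∀ z ∈ S, z.2 ≠ u) :
    (Tsub i0 i1 S u hi hu).coe.IsTree := by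
  set T := Tsub i0 i1 S u hi hu with hT
  have hav : (⟨i0, u⟩ : MV r n) ∈ T.verts := by rw [hT, verts_Tsub]; simp
  have hbv : (⟨i1, u⟩ : MV r n) ∈ T.verts := by rw [hT, verts_Tsub]; simp
  have hadjab : T.Adj ⟨i0, u⟩ ⟨i1, u⟩ := by
    rw [hT, adj_Tsub_iff, mem_Eset]; left; rfl
  have hmem : ∀ x : T.verts, x.val = (⟨i0, u⟩ : MV r n) ∨ x.val = (⟨i1, u⟩ : MV r n)
      ∨ x.val ∈ S := by
    rintro ⟨x, hx⟩
    rw [hT, verts_Tsub] at hx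
    simpa using hx
  have hadjS : ∀ z ∈ S, (z.1 = i0 ∧ T.Adj z ⟨i1, u⟩) ∨ (z.1 ≠ i0 ∧ T.Adj z ⟨i0, u⟩) := by
    intro z hz
    by_cases hzi : z.1 = i0
    · refine Or.inl ⟨hzi, ?_⟩
      rw [hT, adj_Tsub_iff, Sym2.eq_swap, mem_Eset]
      exact Or.inr ⟨z, hz, by rw [if_pos hzi]⟩
    · refine Or.inr ⟨hzi, ?_⟩
      rw [hT, adj_Tsub_iff, Sym2.eq_swap, mem_Eset]
      exact Or.inr ⟨z, hz, by rw [if_neg hzi]⟩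
  constructor
  · -- connected
    rw [connected_iff]
    refine ⟨?_, ⟨⟨_, hav⟩⟩⟩
    have reach : ∀ x : T.verts, T.coe.Reachable x ⟨_, hav⟩ := by
      intro x
      have hab : T.coe.Reachable ⟨_, hbv⟩ ⟨_, hav⟩ := by
        apply Adj.reachable
        rw [Subgraph.coe_adj]
        exact hadjab.symm
      rcases hmem x with hx | hx | hx
      · rw [show x = (⟨_, hav⟩ : T.verts) from Subtype.ext hx]
      · rw [show x = (⟨_, hbv⟩ : T.verts) from Subtype.ext hx]
        exact hab
      · rcases hadjS _ hx with ⟨-, hadj⟩ | ⟨-, hadj⟩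
        · refine Reachable.trans ?_ hab
          apply Adj.reachable
          rw [Subgraph.coe_adj]
          exact hadj
        · apply Adj.reachable
          rw [Subgraph.coe_adj]
          exact hadj
    exact fun x y => (reach x).trans (reach y).symm
  · -- acyclic
    apply doubleStar_isAcyclic (a := ⟨_, hav⟩) (b := ⟨_, hbv⟩)
    intro x hxa hxb
    have hxS : x.val ∈ S := by
      rcases hmem x with hx | hx | hx
      · exact absurd (Subtype.ext hx) hxa
      · exact absurd (Subtype.ext hx) hxb
      · exact hx
    have hxne : ∀ i : Fin r, x.val ≠ (⟨i, u⟩ : MV r n) := fun i => ne_hub hxS hu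
    constructor
    · -- not adjacent to both hubs
      rintro ⟨ha, hb⟩
      rw [Subgraph.coe_adj] at ha hb
      have ha' : s(x.val, (⟨i0, u⟩ : MV r n)) ∈ Eset i0 i1 S u := ha
      have hb' : s(x.val, (⟨i1, u⟩ : MV r n)) ∈ Eset i0 i1 S u := hb
      have h1 : x.val.1 ≠ i0 := by
        rcases adj_cases hu ha' with ⟨h, -⟩ | ⟨-, h⟩ | ⟨h, -⟩ | ⟨h, -, -⟩ | ⟨h, -⟩ | ⟨-, -, h⟩
        · exact absurd h (hxne i0)
        · exact absurd h (hxne i1)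
        · exact absurd h (hxne i1)
        · exact absurd (fst_eq_of_hub_eq h) hi
        · exact absurd h (hxne i0)
        · exact h
      have h2 : x.val.1 = i0 := by
        rcases adj_cases hu hb' with ⟨h, -⟩ | ⟨-, h⟩ | ⟨h, -⟩ | ⟨-, -, h⟩ | ⟨h, -⟩ | ⟨h, -⟩
        · exact absurd h (hxne i0)
        · exact absurd h (hxne i1)
        · exact absurd h (hxne i1)
        · exact h
        · exact absurd h (hxne i0)
        · exact absurd (fst_eq_of_hub_eq h) (Ne.symm hi)
      exact h1 h2
    · -- all neighbours are hubs
      intro y hadj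
      rw [Subgraph.coe_adj] at hadj
      have hadj' : s(x.val, y.val) ∈ Eset i0 i1 S u := hadj
      rcases adj_cases hu hadj' with ⟨h, -⟩ | ⟨h, -⟩ | ⟨h, -⟩ | ⟨h, -, -⟩ | ⟨h, -⟩ | ⟨h, -⟩
      · exact absurd h (hxne i0)
      · left; exact Subtype.ext h
      · exact absurd h (hxne i1)
      · right; exact Subtype.ext h
      · exact absurd h (hxne i0)
      · left; exact Subtype.ext h

lemma hub_eq_iff {i j : Fin r} {x y : Fin n} :
    (⟨i, x⟩ : MV r n) = ⟨j, y⟩ ↔ i = j ∧ x = y := by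
  constructor
  · intro h
    cases h
    exact ⟨rfl, rfl⟩
  · rintro ⟨rfl, rfl⟩
    rfl

lemma Eset_disjoint {w : Fin n} (hu : ∀ z ∈ S, z.2 ≠ u) (hw : ∀ z ∈ S, z.2 ≠ w)
    (huw : u ≠ w) : Disjoint (Eset i0 i1 S u) (Eset i0 i1 S w) := by
  rw [Finset.disjoint_left]
  intro e heu hew
  have hhub := hub_mem_of_mem_Eset heu
  rcases hhub with hh | hh
  · rcases endpoint_mem_of_mem_Eset hew hh with h | h | h
    · exact huw (hub_eq_iff.mp h).2
    · exact huw (hub_eq_iff.mp h).2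
    · exact not_hub_mem hu h
  · rcases endpoint_mem_of_mem_Eset hew hh with h | h | h
    · exact huw (hub_eq_iff.mp h).2
    · exact huw (hub_eq_iff.mp h).2
    · exact not_hub_mem hu h

lemma verts_Tsub_inter {w : Fin n} (hi : i0 ≠ i1) (hu : ∀ z ∈ S, z.2 ≠ u)
    (hw : ∀ z ∈ S, z.2 ≠ w) (huw : u ≠ w) :
    (Tsub i0 i1 S u hi hu).verts ∩ (Tsub i0 i1 S w hi hw).verts = ↑S := by
  rw [verts_Tsub, verts_Tsub]
  ext x
  simp only [Finset.coe_insert, Set.mem_inter_iff, Set.mem_insert_iff, Finset.mem_coe]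
  constructor
  · rintro ⟨h1 | h1 | h1, h2 | h2 | h2⟩
    · exact absurd (hub_eq_iff.mp (h1 ▸ h2 : (⟨i0,u⟩ : MV r n) = ⟨i0,w⟩)).2 huw
    · exact absurd (hub_eq_iff.mp (h1 ▸ h2 : (⟨i0,u⟩ : MV r n) = ⟨i1,w⟩)).2 huw
    · exact h2
    · exact absurd (hub_eq_iff.mp (h1 ▸ h2 : (⟨i1,u⟩ : MV r n) = ⟨i0,w⟩)).2 huw
    · exact absurd (hub_eq_iff.mp (h1 ▸ h2 : (⟨i1,u⟩ : MV r n) = ⟨i1,w⟩)).2 huw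
    · exact h2
    · exact h1
    · exact h1
    · exact h1
  · intro h
    exact ⟨Or.inr (Or.inr h), Or.inr (Or.inr h)⟩

/-- Lower bound: any valid coloring uses at least `k` colors (when one part has `k` vertices). -/
lemma k_le_colors {k ℓ t : ℕ} (hr : 0 < r) (hk : 2 ≤ k) (hl : 0 < ℓ) (hn : k ≤ n)
    (c : Sym2 (MV r n) → Fin t)
    (hc : HasRainbowSTrees (completeMultipartiteGraph (fun _ : Fin r => Fin n)) c k ℓ) :
    k ≤ t := by
  classical
  -- build a k-set inside part ⟨0, hr⟩
  obtain ⟨B, -, hBcard⟩ := Finset.exists_subset_card_eq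
    (show k ≤ (Finset.univ : Finset (Fin n)).card by simpa using hn)
  set i0 : Fin r := ⟨0, hr⟩
  set S : Finset (MV r n) := B.image (fun x => (⟨i0, x⟩ : MV r n)) with hS
  have hScard : S.card = k := by
    rw [hS, Finset.card_image_of_injective _ (fun x y h => (hub_eq_iff.mp h).2), hBcard]
  have hSfst : ∀ z ∈ S, z.1 = i0 := by
    intro z hz
    rw [hS, Finset.mem_image] at hz
    obtain ⟨x, -, rfl⟩ := hz
    rfl
  obtain ⟨T, hT, -⟩ := hc S hScard
  obtain ⟨hSv, hTree, hInj⟩ := hT ⟨0, hl⟩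
  set T0 := T ⟨0, hl⟩
  -- T0 has a vertex outside part i0
  have hv : ∃ v ∈ T0.verts, v.1 ≠ i0 := by
    by_contra hcon
    push_neg at hcon
    obtain ⟨x, hx, y, hy, hxy⟩ := Finset.one_lt_card.mp (by omega : 1 < S.card)
    have hxv : (x : MV r n) ∈ T0.verts := hSv (by simpa using hx)
    have hyv : (y : MV r n) ∈ T0.verts := hSv (by simpa using hy)
    have hreach := hTree.isConnected.preconnected ⟨x, hxv⟩ ⟨y, hyv⟩
    obtain ⟨p⟩ := hreach
    cases p with
    | nil => exact hxy rfl
    | cons hadj q =>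
      rename_i z
      have hGadj := hadj.adj_sub
      simp only [comap_adj, top_adj] at hGadj
      exact hGadj ((hcon _ hxv).trans (hcon _ z.property).symm)
  obtain ⟨v, hvT, hvfst⟩ := hv
  have hvS : v ∉ (S : Set (MV r n)) := by
    intro h
    exact hvfst (hSfst v h)
  -- vertex count
  have hfinv : T0.verts.Finite := Set.toFinite _
  have hcardv : k + 1 ≤ T0.verts.ncard := by
    have hsub : insert v (S : Set (MV r n)) ⊆ T0.verts := by
      intro z hz
      rcases Set.mem_insert_iff.mp hz with rfl | hz
      · exact hvT
      · exact hSv hz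
    calc k + 1 = (S : Set (MV r n)).ncard + 1 := by rw [Set.ncard_coe_finset, hScard]
      _ = (insert v (S : Set (MV r n))).ncard := (Set.ncard_insert_of_notMem hvS).symm
      _ ≤ T0.verts.ncard := Set.ncard_le_ncard hsub hfinv
  -- edge count
  haveI : Fintype ↥T0.verts := hfinv.fintype
  haveI : Fintype ↥T0.coe.edgeSet := Set.Finite.fintype (Set.toFinite _)
  have hedge := hTree.card_edgeFinset
  have hc1 : T0.coe.edgeFinset.card = T0.coe.edgeSet.ncard := by
    rw [SimpleGraph.edgeFinset_card, ← Nat.card_coe_set_eq, Nat.card_eq_fintype_card]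
  have hc2 : Fintype.card ↥T0.verts = T0.verts.ncard := by
    rw [← Nat.card_coe_set_eq, Nat.card_eq_fintype_card]
  have hc3 : T0.edgeSet.ncard = T0.coe.edgeSet.ncard := by
    rw [← T0.image_coe_edgeSet_coe]
    exact Set.ncard_image_of_injective _ (Sym2.map.injective Subtype.val_injective)
  have hk_le : k ≤ T0.edgeSet.ncard := by omega
  -- rainbow implies many colors
  have : T0.edgeSet.ncard ≤ t := by
    calc T0.edgeSet.ncard = (c '' T0.edgeSet).ncard := (Set.ncard_image_of_injOn hInj).symm
      _ ≤ (Set.univ : Set (Fin t)).ncard := Set.ncard_le_ncard (Set.subset_univ _)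
          (Set.toFinite _)
      _ = t := by rw [Set.ncard_univ, Nat.card_eq_fintype_card, Fintype.card_fin]
  omega


end Graph


/-- Existence of a good coloring with `k+1` colors for all large `n`. -/
lemma exists_good_coloring (k ℓ r : ℕ) (hr : 3 ≤ r) (hk : 3 ≤ k) (hl : 1 ≤ ℓ) :
    ∃ N : ℕ, 0 < N ∧ ∀ n : ℕ, N ≤ n →
      ∃ c : Sym2 (MV r n) → Fin (k + 1),
        HasRainbowSTrees (completeMultipartiteGraph (fun _ : Fin r => Fin n)) c k ℓ := by
  classical
  set p := (k+1)^(k+1) with hp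
  set q := p - (k+1).descFactorial (k+1) with hq
  have hqp : q < p := by
    have h1 : 0 < (k+1).descFactorial (k+1) := by
      rw [Nat.descFactorial_self]; exact Nat.factorial_pos _
    have h2 : (k+1).descFactorial (k+1) ≤ p := Nat.descFactorial_le_pow _ _
    have hppos : 0 < p := Nat.pow_pos (by omega)
    omega
  obtain ⟨M, hM⟩ := growth ((r*(ℓ+k))^k * ℓ) k q p hqp
  refine ⟨ℓ * M + 2*k + ℓ + 1, by positivity, fun n hn => ?_⟩
  set m := (n - k) / ℓ with hm
  have hlpos : 0 < ℓ := hl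
  have hdm : ℓ * m ≤ n - k := by
    rw [hm, mul_comm]; exact Nat.div_mul_le_self _ _
  have hdm2 : n - k < ℓ * m + ℓ := by
    rw [hm]
    have h1 := Nat.div_add_mod (n - k) ℓ
    have h2 : (n - k) % ℓ < ℓ := Nat.mod_lt _ hlpos
    omega
  have hMm : M ≤ m := by
    have h1 : ℓ * M ≤ n - k := by omega
    have h1' : M * ℓ ≤ n - k := by rwa [Nat.mul_comm] at h1
    rw [hm]
    exact (Nat.le_div_iff_mul_le hlpos).mpr h1'
  have hn3 : n ≤ (ℓ+k)*(m+1) := by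
    have hexp : (ℓ+k)*(m+1) = ℓ*m + ℓ + (k*m + k) := by ring
    omega
  have hrn : r * n ≤ (r*(ℓ+k)) * (m+1) := by
    rw [mul_assoc]
    exact Nat.mul_le_mul_left r hn3
  have hchoose : (r*n).choose k ≤ (r*(ℓ+k))^k * (m+1)^k := by
    calc (r*n).choose k ≤ (r*n)^k := Nat.choose_le_pow _ _
      _ ≤ ((r*(ℓ+k))*(m+1))^k := Nat.pow_le_pow_left hrn k
      _ = (r*(ℓ+k))^k * (m+1)^k := mul_pow _ _ _
  have hcardMV : Fintype.card (MV r n) = r * n := by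
    rw [Fintype.card_sigma]
    simp [Finset.sum_const, mul_comm]
  set i0 : Fin r := ⟨0, by omega⟩ with hi0
  set i1 : Fin r := ⟨1, by omega⟩ with hi1
  have hi : i0 ≠ i1 := by
    rw [hi0, hi1]
    simp [Fin.ext_iff]
  -- hub data for each S
  have hdata : ∀ S : Finset (MV r n), ∃ us : Fin ℓ → Fin m → Fin n,
      S.card = k → (∀ j i z, z ∈ S → z.2 ≠ us j i) ∧
        Function.Injective (fun ji : Fin ℓ × Fin m => us ji.1 ji.2) := by
    intro S
    by_cases hS : S.card = k
    · have hA : ℓ * m ≤ (Finset.univ \ S.image (fun z : MV r n => z.2)).card := by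
        have h1 : (S.image (fun z : MV r n => z.2)).card ≤ k :=
          le_trans Finset.card_image_le (le_of_eq hS)
        have h2 : n - k ≤ (Finset.univ \ S.image (fun z : MV r n => z.2)).card := by
          rw [Finset.card_sdiff_of_subset (Finset.subset_univ _)]
          have : (Finset.univ : Finset (Fin n)).card = n := by simp
          omega
        omega
      obtain ⟨B, hBsub, hBcard⟩ := Finset.exists_subset_card_eq hA
      set eB := B.orderIsoOfFin hBcard with heB
      refine ⟨fun j i => (eB (finProdFinEquiv (j, i))).val, fun _ => ⟨?_, ?_⟩⟩
      · intro j i z hz hzz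
        have hmem : ((eB (finProdFinEquiv (j, i))).val : Fin n)
            ∈ Finset.univ \ S.image (fun z : MV r n => z.2) :=
          hBsub (eB (finProdFinEquiv (j, i))).property
        rw [Finset.mem_sdiff] at hmem
        exact hmem.2 (Finset.mem_image.mpr ⟨z, hz, hzz⟩)
      · intro ji ji' h
        have h1 : eB (finProdFinEquiv (ji.1, ji.2)) = eB (finProdFinEquiv (ji'.1, ji'.2)) :=
          Subtype.ext h
        have h2 := finProdFinEquiv.injective (eB.injective h1)
        calc ji = (ji.1, ji.2) := rfl
          _ = (ji'.1, ji'.2) := h2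
          _ = ji' := rfl
    · exact ⟨fun _ _ => ⟨0, by omega⟩, fun h => absurd h hS⟩
  choose us hus using hdata
  -- existence of a globally good coloring by counting
  set A := (k+1) ^ Fintype.card (Sym2 (MV r n)) with hA
  have hgood : ∃ c : Sym2 (MV r n) → Fin (k+1), ∀ S : Finset (MV r n), S.card = k →
      ∀ j : Fin ℓ, ∃ i : Fin m, Set.InjOn c ↑(Eset i0 i1 S (us S j i)) := by
    by_contra hcon
    push_neg at hcon
    -- every coloring is bad for some (S, j)
    have hsub : (Finset.univ : Finset (Sym2 (MV r n) → Fin (k+1))) ⊆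
        (Finset.univ.powersetCard k).biUnion (fun S => Finset.univ.biUnion (fun j : Fin ℓ =>
          Finset.univ.filter (fun c : Sym2 (MV r n) → Fin (k+1) =>
            ∀ i : Fin m, ¬ Set.InjOn c ↑(Eset i0 i1 S (us S j i))))) := by
      intro c _
      obtain ⟨S, hS, j, hj⟩ := hcon c
      rw [Finset.mem_biUnion]
      refine ⟨S, Finset.mem_powersetCard_univ.mpr hS, ?_⟩
      rw [Finset.mem_biUnion]
      exact ⟨j, Finset.mem_univ _, Finset.mem_filter.mpr ⟨Finset.mem_univ _, hj⟩⟩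
    have hcnt : ∀ S : Finset (MV r n), S.card = k → ∀ j : Fin ℓ,
        (Finset.univ.filter (fun c : Sym2 (MV r n) → Fin (k+1) =>
          ∀ i : Fin m, ¬ Set.InjOn c ↑(Eset i0 i1 S (us S j i)))).card * p ^ m
          = q ^ m * A := by
      intro S hS j
      obtain ⟨hu, hinj⟩ := hus S hS
      have hdisj : ∀ i i' : Fin m, i ≠ i' →
          Disjoint (Eset i0 i1 S (us S j i)) (Eset i0 i1 S (us S j i')) := by
        intro i i' hii
        refine Eset_disjoint (fun z hz => hu j i z hz) (fun z hz => hu j i' z hz) ?_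
        intro h
        have := hinj (a₁ := (j, i)) (a₂ := (j, i')) h
        exact hii (congrArg Prod.snd this)
      have hcards : ∀ i : Fin m, (Eset i0 i1 S (us S j i)).card = k + 1 := fun i => by
        rw [card_Eset hi (fun z hz => hu j i z hz), hS]
      have hmain := count_bad (α := Fin (k+1))
        (fun i : Fin m => Eset i0 i1 S (us S j i)) hdisj hcards
      rw [Nat.card_eq_fintype_card, Fintype.card_subtype] at hmain
      simpa [hp, hq, hA, Fintype.card_fin] using hmain
    -- union bound
    have hA1 : A = (Finset.univ : Finset (Sym2 (MV r n) → Fin (k+1))).card := by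
      rw [Finset.card_univ, Fintype.card_fun, Fintype.card_fin]
    have hcard1 : A ≤ ∑ S ∈ Finset.univ.powersetCard k, ∑ j : Fin ℓ,
        (Finset.univ.filter (fun c : Sym2 (MV r n) → Fin (k+1) =>
          ∀ i : Fin m, ¬ Set.InjOn c ↑(Eset i0 i1 S (us S j i)))).card := by
      rw [hA1]
      calc (Finset.univ : Finset (Sym2 (MV r n) → Fin (k+1))).card
          ≤ ((Finset.univ.powersetCard k).biUnion (fun S => Finset.univ.biUnion
            (fun j : Fin ℓ => Finset.univ.filter (fun c : Sym2 (MV r n) → Fin (k+1) =>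
              ∀ i : Fin m, ¬ Set.InjOn c ↑(Eset i0 i1 S (us S j i)))))).card :=
            Finset.card_le_card hsub
        _ ≤ ∑ S ∈ Finset.univ.powersetCard k, (Finset.univ.biUnion
            (fun j : Fin ℓ => Finset.univ.filter (fun c : Sym2 (MV r n) → Fin (k+1) =>
              ∀ i : Fin m, ¬ Set.InjOn c ↑(Eset i0 i1 S (us S j i))))).card :=
            Finset.card_biUnion_le
        _ ≤ ∑ S ∈ Finset.univ.powersetCard k, ∑ j : Fin ℓ,
            (Finset.univ.filter (fun c : Sym2 (MV r n) → Fin (k+1) =>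
              ∀ i : Fin m, ¬ Set.InjOn c ↑(Eset i0 i1 S (us S j i)))).card :=
            Finset.sum_le_sum (fun S _ => Finset.card_biUnion_le)
    have hsum2 : (∑ S ∈ Finset.univ.powersetCard k, ∑ j : Fin ℓ,
        (Finset.univ.filter (fun c : Sym2 (MV r n) → Fin (k+1) =>
          ∀ i : Fin m, ¬ Set.InjOn c ↑(Eset i0 i1 S (us S j i)))).card) * p ^ m
        = (r*n).choose k * ℓ * (q ^ m * A) := by
      rw [Finset.sum_mul]
      have hSterm : ∀ S ∈ Finset.univ.powersetCard k,
          (∑ j : Fin ℓ, (Finset.univ.filter (fun c : Sym2 (MV r n) → Fin (k+1) =>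
            ∀ i : Fin m, ¬ Set.InjOn c ↑(Eset i0 i1 S (us S j i)))).card) * p ^ m
            = ℓ * (q ^ m * A) := by
        intro S hS
        rw [Finset.sum_mul]
        rw [Finset.sum_congr rfl (fun j _ =>
          hcnt S (Finset.mem_powersetCard_univ.mp hS) j)]
        rw [Finset.sum_const, Finset.card_univ, Fintype.card_fin, smul_eq_mul]
      rw [Finset.sum_congr rfl hSterm, Finset.sum_const, Finset.card_powersetCard,
        Finset.card_univ, hcardMV, smul_eq_mul]
      ring
    have hApos : 0 < A := Nat.pow_pos (by omega)
    have hgrow : (r*n).choose k * ℓ * q ^ m < p ^ m := by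
      calc (r*n).choose k * ℓ * q ^ m ≤ ((r*(ℓ+k))^k * (m+1)^k) * ℓ * q ^ m := by
            apply Nat.mul_le_mul_right
            exact Nat.mul_le_mul_right _ hchoose
        _ = ((r*(ℓ+k))^k * ℓ) * (m+1)^k * q^m := by ring
        _ < p ^ m := hM m hMm
    have hfinal : A * p ^ m < p ^ m * A := by
      calc A * p ^ m ≤ (∑ S ∈ Finset.univ.powersetCard k, ∑ j : Fin ℓ,
            (Finset.univ.filter (fun c : Sym2 (MV r n) → Fin (k+1) =>
              ∀ i : Fin m, ¬ Set.InjOn c ↑(Eset i0 i1 S (us S j i)))).card) * p ^ m :=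
            Nat.mul_le_mul_right _ hcard1
        _ = (r*n).choose k * ℓ * (q ^ m * A) := hsum2
        _ = ((r*n).choose k * ℓ * q ^ m) * A := by ring
        _ < p ^ m * A := by
            exact Nat.mul_lt_mul_of_lt_of_le hgrow (le_refl A) hApos
    rw [mul_comm A (p ^ m)] at hfinal
    exact lt_irrefl _ hfinal
  -- build the rainbow trees from the good coloring
  obtain ⟨c, hc⟩ := hgood
  refine ⟨c, ?_⟩
  intro S hS
  have hforall := hc S hS
  choose isel hisel using hforall
  obtain ⟨hu, hinj⟩ := hus S hS
  have hune : ∀ j j' : Fin ℓ, j ≠ j' → us S j (isel j) ≠ us S j' (isel j') := by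
    intro j j' hjj h
    have := hinj (a₁ := (j, isel j)) (a₂ := (j', isel j')) h
    exact hjj (congrArg Prod.fst this)
  refine ⟨fun j => Tsub i0 i1 S (us S j (isel j)) hi (fun z hz => hu j (isel j) z hz), ?_, ?_⟩
  · intro j
    refine ⟨?_, isTree_Tsub _ _, ?_⟩
    · rw [verts_Tsub]
      intro z hz
      simp only [Finset.coe_insert, Set.mem_insert_iff]
      exact Or.inr (Or.inr hz)
    · rw [edgeSet_Tsub]
      exact hisel j
  · intro j j' hjj
    constructor
    · have hd := Eset_disjoint (i0 := i0) (i1 := i1) (fun z hz => hu j (isel j) z hz)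
        (fun z hz => hu j' (isel j') z hz) (hune j j' hjj)
      rw [edgeSet_Tsub, edgeSet_Tsub]
      rw [← Finset.disjoint_coe] at hd
      exact Set.disjoint_iff_inter_eq_empty.mp hd
    · exact verts_Tsub_inter hi _ _ (hune j j' hjj)


end RxProof

open RxProof in
theorem rx_multipartite_eq_k_or_succ (k ℓ r : ℕ) (hr : 3 ≤ r) (hrk : r ≤ k) (hℓ : 1 ≤ ℓ)
    (hℓ' : (ℓ : ℚ) ≤ (r.choose 2 : ℚ) * (⌈(k : ℚ) / (r : ℚ)⌉ : ℚ) ^ 2 /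
      (⌊(k : ℚ) / (r : ℚ)⌋ : ℚ)) :
    ∃ N : ℕ, 0 < N ∧ ∀ n : ℕ, N ≤ n →
      rainbowIndex (completeMultipartiteGraph (fun _ : Fin r => Fin n)) k ℓ = k ∨
      rainbowIndex (completeMultipartiteGraph (fun _ : Fin r => Fin n)) k ℓ = k + 1 := by
  have hk3 : 3 ≤ k := le_trans hr hrk
  obtain ⟨N0, hN0pos, hN0⟩ := exists_good_coloring k ℓ r hr hk3 hℓ
  refine ⟨max N0 k, lt_of_lt_of_le hN0pos (le_max_left _ _), fun n hn => ?_⟩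
  have hnN0 : N0 ≤ n := le_trans (le_max_left _ _) hn
  have hnk : k ≤ n := le_trans (le_max_right _ _) hn
  obtain ⟨c, hc⟩ := hN0 n hnN0
  set idx := {t : ℕ | ∃ c : Sym2 ((i : Fin r) × Fin n) → Fin t,
    HasRainbowSTrees (completeMultipartiteGraph (fun _ : Fin r => Fin n)) c k ℓ} with hidx
  have hmem : k + 1 ∈ idx := ⟨c, hc⟩
  have hlb : ∀ t ∈ idx, k ≤ t := by
    rintro t ⟨c', hc'⟩
    exact k_le_colors (by omega) (by omega) (by omega) hnk c' hc'
  have h1 : sInf idx ∈ idx := Nat.sInf_mem ⟨k + 1, hmem⟩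
  have h2 : k ≤ sInf idx := hlb _ h1
  have h3 : sInf idx ≤ k + 1 := Nat.sInf_le hmem
  have : rainbowIndex (completeMultipartiteGraph (fun _ : Fin r => Fin n)) k ℓ = sInf idx := rfl
  omega
end

section
/- For every triple of positive integers k, ℓ, r with k ≥ 3 and r ≥ 3, there exists a positive integer N = N(k,ℓ,r) such that for every integer n ≥ N, rx_{k,ℓ}(K_{r×n}) ≤ k + 1. -/
open SimpleGraph

open Finset Filter
set_option maxHeartbeats 1000000


namespace RxCount

variable {α κ : Type*} [Fintype α] [DecidableEq α] [Fintype κ] [DecidableEq κ]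

/-- merge two colorings along a finset -/
def mergeFn (E : Finset α) (c d : α → κ) : α → κ := fun e => if e ∈ E then c e else d e

lemma mergeFn_mem {E : Finset α} {e : α} (he : e ∈ E) (c d : α → κ) :
    mergeFn E c d e = c e := if_pos he

lemma mergeFn_not_mem {E : Finset α} {e : α} (he : e ∉ E) (c d : α → κ) :
    mergeFn E c d e = d e := if_neg he

lemma mergeFn_invol (E : Finset α) (c d : α → κ) :
    mergeFn E (mergeFn E c d) (mergeFn E d c) = c := by
  funext e; by_cases h : e ∈ E <;> simp [mergeFn, h]

lemma card_filter_and_mul (A B : (α → κ) → Prop) (E : Finset α)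
    [DecidablePred A] [DecidablePred B] [DecidablePred fun c => A c ∧ B c]
    (hA : ∀ c c' : α → κ, (∀ e ∈ E, c e = c' e) → A c → A c')
    (hB : ∀ c c' : α → κ, (∀ e ∉ E, c e = c' e) → B c → B c') :
    (univ.filter fun c : α → κ => A c ∧ B c).card * Fintype.card (α → κ)
      = (univ.filter fun c : α → κ => A c).card * (univ.filter fun c : α → κ => B c).card := by
  classical
  have key : (((univ.filter fun c : α → κ => A c ∧ B c)) ×ˢ (univ : Finset (α → κ))).card
      = ((univ.filter fun c : α → κ => A c) ×ˢ (univ.filter fun c : α → κ => B c)).card := by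
    apply Finset.card_bij (fun p _ => (mergeFn E p.1 p.2, mergeFn E p.2 p.1))
    · rintro ⟨c, d⟩ hp
      simp only [Finset.mem_product, Finset.mem_filter, Finset.mem_univ, true_and] at hp ⊢
      refine ⟨hA c _ (fun e he => (mergeFn_mem he c d).symm) hp.1.1,
        hB c _ (fun e he => (mergeFn_not_mem he d c).symm) hp.1.2⟩
    · rintro ⟨c, d⟩ _ ⟨c', d'⟩ _ h
      have h1 := congrArg Prod.fst h
      have h2 := congrArg Prod.snd h
      simp only at h1 h2
      have e1 : c = c' := by
        rw [← mergeFn_invol E c d, ← mergeFn_invol E c' d', h1, h2]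
      have e2 : d = d' := by
        rw [← mergeFn_invol E d c, ← mergeFn_invol E d' c', h1, h2]
      rw [Prod.ext_iff]; exact ⟨e1, e2⟩
    · rintro ⟨c, d⟩ hp
      simp only [Finset.mem_product, Finset.mem_filter, Finset.mem_univ, true_and] at hp
      refine ⟨(mergeFn E c d, mergeFn E d c), ?_, ?_⟩
      · simp only [Finset.mem_product, Finset.mem_filter, Finset.mem_univ, true_and, and_true]
        refine ⟨hA c _ (fun e he => (mergeFn_mem he c d).symm) hp.1,
          hB d _ (fun e he => (mergeFn_not_mem he c d).symm) hp.2⟩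
      · rw [Prod.ext_iff]
        exact ⟨mergeFn_invol E c d, mergeFn_invol E d c⟩
  simpa only [Finset.card_product, Finset.card_univ] using key

lemma card_filter_forall_mul {m : ℕ} (A : Fin m → (α → κ) → Prop) (E : Fin m → Finset α)
    [∀ j, DecidablePred (A j)] [DecidablePred fun c : α → κ => ∀ j, A j c]
    (hloc : ∀ j (c c' : α → κ), (∀ e ∈ E j, c e = c' e) → A j c → A j c')
    (hdisj : ∀ i j, i ≠ j → Disjoint (E i) (E j)) :
    (univ.filter fun c : α → κ => ∀ j, A j c).card * (Fintype.card (α → κ)) ^ m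
      = Fintype.card (α → κ) * ∏ j, (univ.filter fun c : α → κ => A j c).card := by
  classical
  induction m with
  | zero => simp
  | succ m ih =>
    have hsplit : (univ.filter fun c : α → κ => ∀ j, A j c)
        = univ.filter fun c : α → κ =>
            (A (Fin.last m) c ∧ ∀ j : Fin m, A j.castSucc c) := by
      apply Finset.filter_congr
      intro c _
      constructor
      · exact fun h => ⟨h _, fun j => h _⟩
      · rintro ⟨h1, h2⟩ j
        exact Fin.lastCases h1 h2 j
    have step := card_filter_and_mul (A := fun c => A (Fin.last m) c)
      (B := fun c => ∀ j : Fin m, A j.castSucc c) (E := E (Fin.last m))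
      (hA := fun c c' h => hloc _ c c' h)
      (hB := by
        intro c c' h hall j
        refine hloc _ c c' (fun e he => h e ?_) (hall j)
        intro hel
        exact (Finset.disjoint_left.mp
          (hdisj _ _ (Fin.castSucc_lt_last j).ne) he) hel)
    have ihs := ih (fun j => A j.castSucc) (fun j => E j.castSucc)
      (fun j c c' h => hloc _ c c' h)
      (fun i j hij => hdisj _ _ (by simpa [Fin.castSucc_inj] using hij))
    calc (univ.filter fun c : α → κ => ∀ j, A j c).card * (Fintype.card (α → κ)) ^ (m + 1)
        = ((univ.filter fun c : α → κ =>
            (A (Fin.last m) c ∧ ∀ j : Fin m, A j.castSucc c)).card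
            * Fintype.card (α → κ)) * (Fintype.card (α → κ)) ^ m := by
          rw [hsplit]; ring
      _ = (univ.filter fun c : α → κ => A (Fin.last m) c).card *
            ((univ.filter fun c : α → κ => ∀ j : Fin m, A j.castSucc c).card
              * (Fintype.card (α → κ)) ^ m) := by rw [step]; ring
      _ = (univ.filter fun c : α → κ => A (Fin.last m) c).card *
            (Fintype.card (α → κ) * ∏ j : Fin m,
              (univ.filter fun c : α → κ => A j.castSucc c).card) := by rw [ihs]
      _ = Fintype.card (α → κ) * ∏ j : Fin (m + 1),
            (univ.filter fun c : α → κ => A j c).card := by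
          rw [Fin.prod_univ_castSucc]; ring

lemma card_filter_injOn (E : Finset α)
    [DecidablePred fun c : α → κ => Set.InjOn c (↑E : Set α)] :
    (univ.filter fun c : α → κ => Set.InjOn c ↑E).card
      = (Fintype.card κ).descFactorial E.card
        * (Fintype.card κ) ^ (Fintype.card α - E.card) := by
  classical
  have h1 : (univ.filter fun c : α → κ => Set.InjOn c ↑E).card
      = Fintype.card {c : α → κ // Set.InjOn c ↑E} := by
    rw [Fintype.card_subtype]
  rw [h1]
  have e1 : {c : α → κ // Set.InjOn c ↑E}
      ≃ {p : ({a : α // a ∈ E} → κ) × ({a : α // ¬ a ∈ E} → κ) //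
          Function.Injective p.1} := by
    refine Equiv.subtypeEquiv (Equiv.piEquivPiSubtypeProd (fun a => a ∈ E) fun _ => κ) ?_
    intro c
    constructor
    · intro h x y hxy
      exact Subtype.ext (h (Finset.mem_coe.mpr x.2) (Finset.mem_coe.mpr y.2) hxy)
    · intro h a ha b hb hab
      exact congrArg Subtype.val
        (h (a₁ := ⟨a, Finset.mem_coe.mp ha⟩) (a₂ := ⟨b, Finset.mem_coe.mp hb⟩) hab)
  have e2 : {p : ({a : α // a ∈ E} → κ) × ({a : α // ¬ a ∈ E} → κ) //
          Function.Injective p.1}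
      ≃ {f : {a : α // a ∈ E} → κ // Function.Injective f} × ({a : α // ¬ a ∈ E} → κ) :=
    Equiv.prodSubtypeFstEquivSubtypeProd
  have e3 : {f : {a : α // a ∈ E} → κ // Function.Injective f}
      ≃ ({a : α // a ∈ E} ↪ κ) := Equiv.subtypeInjectiveEquivEmbedding _ _
  rw [Fintype.card_congr ((e1.trans e2).trans (Equiv.prodCongr e3 (Equiv.refl _)))]
  rw [Fintype.card_prod, Fintype.card_embedding_eq, Fintype.card_fun,
    Fintype.card_coe, Fintype.card_subtype_compl, Fintype.card_coe]

end RxCount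

namespace RxGraph

variable {r n : ℕ}

abbrev V (r n : ℕ) := (i : Fin r) × Fin n

abbrev G (r n : ℕ) : SimpleGraph (V r n) := completeMultipartiteGraph (fun _ : Fin r => Fin n)

/-- Edge set of a double star: center `u` joined to `v` and to all of `S` outside
`u`'s part, `v` joined to the part of `S` in `u`'s part. -/
def starEdges (S : Finset (V r n)) (u v : V r n) : Finset (Sym2 (V r n)) :=
  insert s(u, v)
    (((S.filter fun s => s.1 = u.1).image fun s => s(v, s)) ∪
      ((S.filter fun s => ¬ s.1 = u.1).image fun s => s(u, s)))

lemma mem_starEdges {S : Finset (V r n)} {u v : V r n} {e : Sym2 (V r n)} :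
    e ∈ starEdges S u v ↔
      e = s(u, v) ∨ (∃ s ∈ S, s.1 = u.1 ∧ e = s(v, s)) ∨
        (∃ s ∈ S, ¬ s.1 = u.1 ∧ e = s(u, s)) := by
  simp only [starEdges, mem_insert, mem_union, mem_image, mem_filter]
  constructor
  · rintro (h | ⟨s, ⟨hs, hp⟩, rfl⟩ | ⟨s, ⟨hs, hp⟩, rfl⟩)
    · exact Or.inl h
    · exact Or.inr (Or.inl ⟨s, hs, hp, rfl⟩)
    · exact Or.inr (Or.inr ⟨s, hs, hp, rfl⟩)
  · rintro (h | ⟨s, hs, hp, rfl⟩ | ⟨s, hs, hp, rfl⟩)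
    · exact Or.inl h
    · exact Or.inr (Or.inl ⟨s, ⟨hs, hp⟩, rfl⟩)
    · exact Or.inr (Or.inr ⟨s, ⟨hs, hp⟩, rfl⟩)

variable {S : Finset (V r n)} {u v : V r n}

/-- The double-star subgraph. -/
def dblStar (S : Finset (V r n)) (u v : V r n) (huv : u.1 ≠ v.1)
    (huS : u ∉ S) (hvS : v ∉ S) : (G r n).Subgraph where
  verts := ↑S ∪ {u, v}
  Adj a b := s(a, b) ∈ starEdges S u v
  adj_sub := by
    intro a b h
    rw [mem_starEdges] at h
    show a.1 ≠ b.1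
    rcases h with h | ⟨s, hs, hp, h⟩ | ⟨s, hs, hp, h⟩ <;> rw [Sym2.eq_iff] at h
    · rcases h with ⟨rfl, rfl⟩ | ⟨rfl, rfl⟩
      · exact huv
      · exact huv.symm
    · rcases h with ⟨rfl, rfl⟩ | ⟨rfl, rfl⟩
      · rw [hp]; exact fun hh => huv hh.symm
      · rw [hp]; exact huv
    · rcases h with ⟨rfl, rfl⟩ | ⟨rfl, rfl⟩
      · exact fun hh => hp hh.symm
      · exact hp
  edge_vert := by
    intro a b h
    rw [mem_starEdges] at h
    rcases h with h | ⟨s, hs, hp, h⟩ | ⟨s, hs, hp, h⟩ <;> rw [Sym2.eq_iff] at h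
    · rcases h with ⟨rfl, rfl⟩ | ⟨rfl, rfl⟩
      · exact Or.inr (Or.inl rfl)
      · exact Or.inr (Or.inr rfl)
    · rcases h with ⟨rfl, rfl⟩ | ⟨rfl, rfl⟩
      · exact Or.inr (Or.inr rfl)
      · exact Or.inl hs
    · rcases h with ⟨rfl, rfl⟩ | ⟨rfl, rfl⟩
      · exact Or.inr (Or.inl rfl)
      · exact Or.inl hs
  symm := by
    constructor
    intro a b h
    rwa [Sym2.eq_swap]

lemma dblStar_edgeSet (huv : u.1 ≠ v.1) (huS : u ∉ S) (hvS : v ∉ S) :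
    (dblStar S u v huv huS hvS).edgeSet = ↑(starEdges S u v) := by
  ext e
  induction e with
  | _ a b => rw [Subgraph.mem_edgeSet, Finset.mem_coe]; rfl

lemma starEdges_card (huv : u.1 ≠ v.1) (huS : u ∉ S) (hvS : v ∉ S) :
    (starEdges S u v).card = S.card + 1 := by
  classical
  have hne : u ≠ v := fun h => huv (congrArg Sigma.fst h)
  have h1 : Set.InjOn (fun s => s(v, s)) ↑(S.filter fun s => s.1 = u.1) := by
    intro a _ b _ hab
    exact (Sym2.congr_right (α := V r n) (a := v)).mp hab
  have h2 : Set.InjOn (fun s => s(u, s)) ↑(S.filter fun s => ¬ s.1 = u.1) := by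
    intro a _ b _ hab
    exact (Sym2.congr_right (α := V r n) (a := u)).mp hab
  have hd : Disjoint ((S.filter fun s => s.1 = u.1).image fun s => s(v, s))
      ((S.filter fun s => ¬ s.1 = u.1).image fun s => s(u, s)) := by
    rw [Finset.disjoint_left]
    rintro e he1 he2
    simp only [mem_image, mem_filter] at he1 he2
    obtain ⟨a, ⟨haS, hap⟩, rfl⟩ := he1
    obtain ⟨b, ⟨hbS, hbp⟩, hbe⟩ := he2
    rw [Sym2.eq_iff] at hbe
    rcases hbe with ⟨huv', -⟩ | ⟨hua, -⟩
    · exact hne huv'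
    · exact huS (by rw [hua]; exact haS)
  have hins : s(u, v) ∉ ((S.filter fun s => s.1 = u.1).image fun s => s(v, s)) ∪
      ((S.filter fun s => ¬ s.1 = u.1).image fun s => s(u, s)) := by
    rw [mem_union]
    rintro (h | h) <;> simp only [mem_image, mem_filter] at h
    · obtain ⟨a, ⟨haS, hap⟩, hae⟩ := h
      rw [Sym2.eq_iff] at hae
      rcases hae with ⟨h1', -⟩ | ⟨-, hau⟩
      · exact hne h1'.symm
      · exact huS (by rw [← hau]; exact haS)
    · obtain ⟨a, ⟨haS, hap⟩, hae⟩ := h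
      rw [Sym2.eq_iff] at hae
      rcases hae with ⟨-, hav⟩ | ⟨huv', -⟩
      · exact hvS (by rw [← hav]; exact haS)
      · exact hne huv'
  rw [starEdges, Finset.card_insert_of_notMem hins, Finset.card_union_of_disjoint hd,
    Finset.card_image_of_injOn h1, Finset.card_image_of_injOn h2]
  have hsum := Finset.card_filter_add_card_filter_not (s := S)
    (p := fun s => s.1 = u.1)
  omega


section Tree

variable (huv : u.1 ≠ v.1) (huS : u ∉ S) (hvS : v ∉ S)

lemma dblStar_mem_u : u ∈ (dblStar S u v huv huS hvS).verts := by
  right; left; rfl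

lemma dblStar_mem_v : v ∈ (dblStar S u v huv huS hvS).verts := by
  right; right; rfl

lemma dblStar_mem_S {s : V r n} (hs : s ∈ S) : s ∈ (dblStar S u v huv huS hvS).verts :=
  Or.inl hs

lemma dblStar_adj_uv : (dblStar S u v huv huS hvS).Adj u v :=
  mem_starEdges.mpr (Or.inl rfl)

lemma dblStar_adj_vs {s : V r n} (hs : s ∈ S) (hp : s.1 = u.1) :
    (dblStar S u v huv huS hvS).Adj v s :=
  mem_starEdges.mpr (Or.inr (Or.inl ⟨s, hs, hp, rfl⟩))

lemma dblStar_adj_us {s : V r n} (hs : s ∈ S) (hp : ¬ s.1 = u.1) :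
    (dblStar S u v huv huS hvS).Adj u s :=
  mem_starEdges.mpr (Or.inr (Or.inr ⟨s, hs, hp, rfl⟩))

lemma dblStar_unique_nbr_v {s w : V r n} (hs : s ∈ S) (hp : s.1 = u.1)
    (h : (dblStar S u v huv huS hvS).Adj s w) : w = v := by
  have hne : u ≠ v := fun h' => huv (congrArg Sigma.fst h')
  have h' := mem_starEdges.mp h
  rcases h' with h' | ⟨s', hs', hp', h'⟩ | ⟨s', hs', hp', h'⟩ <;> rw [Sym2.eq_iff] at h'
  · rcases h' with ⟨hsu, -⟩ | ⟨hsv, -⟩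
    · exact absurd (hsu ▸ hs) huS
    · exact absurd (hsv ▸ hs) hvS
  · rcases h' with ⟨hsv, -⟩ | ⟨-, hwv⟩
    · exact absurd (hsv ▸ hs) hvS
    · exact hwv
  · rcases h' with ⟨hsu, -⟩ | ⟨hss', hwu⟩
    · exact absurd (hsu ▸ hs) huS
    · exact absurd (hss' ▸ hp) hp'

lemma dblStar_unique_nbr_u {s w : V r n} (hs : s ∈ S) (hp : ¬ s.1 = u.1)
    (h : (dblStar S u v huv huS hvS).Adj s w) : w = u := by
  have hne : u ≠ v := fun h' => huv (congrArg Sigma.fst h')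
  have h' := mem_starEdges.mp h
  rcases h' with h' | ⟨s', hs', hp', h'⟩ | ⟨s', hs', hp', h'⟩ <;> rw [Sym2.eq_iff] at h'
  · rcases h' with ⟨hsu, -⟩ | ⟨hsv, -⟩
    · exact absurd (hsu ▸ hs) huS
    · exact absurd (hsv ▸ hs) hvS
  · rcases h' with ⟨hsv, -⟩ | ⟨hss', hwv⟩
    · exact absurd (hsv ▸ hs) hvS
    · exact absurd (by rw [hss']; exact hp') hp
  · rcases h' with ⟨hsu, -⟩ | ⟨-, hwu⟩
    · exact absurd (hsu ▸ hs) huS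
    · exact hwu

lemma dblStar_connected : (dblStar S u v huv huS hvS).coe.Connected := by
  set T := dblStar S u v huv huS hvS with hT
  have hu : u ∈ T.verts := dblStar_mem_u huv huS hvS
  have hv : v ∈ T.verts := dblStar_mem_v huv huS hvS
  have hreach : ∀ a : T.verts, T.coe.Reachable a ⟨u, hu⟩ := by
    rintro ⟨a, ha⟩
    rcases ha with haS | ha | ha
    · by_cases hp : a.1 = u.1
      · have h1 : T.coe.Adj ⟨a, Or.inl haS⟩ ⟨v, hv⟩ :=
          (Subgraph.coe_adj _ _ _).mpr ((dblStar_adj_vs huv huS hvS haS hp).symm)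
        have h2 : T.coe.Adj ⟨v, hv⟩ ⟨u, hu⟩ :=
          (Subgraph.coe_adj _ _ _).mpr (dblStar_adj_uv huv huS hvS).symm
        exact (h1.reachable).trans h2.reachable
      · exact ((Subgraph.coe_adj _ _ _).mpr
          ((dblStar_adj_us huv huS hvS haS hp).symm)).reachable
    · subst ha; exact Reachable.refl _
    · subst ha
      exact ((Subgraph.coe_adj _ _ _).mpr (dblStar_adj_uv huv huS hvS).symm).reachable
  haveI : Nonempty T.verts := ⟨⟨u, hu⟩⟩
  exact ⟨fun a b => (hreach a).trans (hreach b).symm⟩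

lemma dblStar_isAcyclic : (dblStar S u v huv huS hvS).coe.IsAcyclic := by
  classical
  set T := dblStar S u v huv huS hvS with hT
  have hu : u ∈ T.verts := dblStar_mem_u huv huS hvS
  have hv : v ∈ T.verts := dblStar_mem_v huv huS hvS
  intro a w hw
  -- find a vertex of the cycle which is neither u nor v
  have hnodup : w.support.tail.Nodup := hw.support_nodup
  have hlen : 3 ≤ w.length := hw.three_le_length
  have hcard : w.support.tail.toFinset.card = w.length := by
    rw [List.toFinset_card_of_nodup hnodup]
    have := w.length_support
    have ht : w.support.tail.length = w.support.length - 1 := by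
      cases hs : w.support with
      | nil => exact absurd hs w.support_ne_nil
      | cons x l => simp [hs]
    omega
  have hex : ∃ x ∈ w.support.tail, (x : T.verts).1 ≠ u ∧ (x : T.verts).1 ≠ v := by
    by_contra hcon
    push_neg at hcon
    have hsub : w.support.tail.toFinset ⊆ {(⟨u, hu⟩ : T.verts), ⟨v, hv⟩} := by
      intro x hx
      rw [List.mem_toFinset] at hx
      rcases Classical.em ((x : T.verts).1 = u) with h | h
      · exact Finset.mem_insert.mpr (Or.inl (Subtype.ext h))
      · exact Finset.mem_insert.mpr (Or.inr (Finset.mem_singleton.mpr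
          (Subtype.ext (hcon x hx h))))
    have := Finset.card_le_card hsub
    have h2 : ({(⟨u, hu⟩ : T.verts), ⟨v, hv⟩} : Finset T.verts).card ≤ 2 :=
      Finset.card_insert_le _ _ |>.trans (by simp)
    omega
  obtain ⟨s0, hs0tail, hs0u, hs0v⟩ := hex
  have hs0mem : s0 ∈ w.support := List.mem_of_mem_tail hs0tail
  have hs0S : (s0 : T.verts).1 ∈ S := by
    rcases s0.2 with h | h | h
    · exact h
    · exact absurd h hs0u
    · exact absurd h hs0v
  -- unique neighbor of s0
  obtain ⟨nb, hkey⟩ : ∃ nb : T.verts, ∀ y : T.verts, T.coe.Adj s0 y → y = nb := by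
    by_cases hp : (s0 : T.verts).1.1 = u.1
    · refine ⟨⟨v, hv⟩, fun y hy => ?_⟩
      exact Subtype.ext (dblStar_unique_nbr_v huv huS hvS hs0S hp
        ((Subgraph.coe_adj _ _ _).mp hy))
    · refine ⟨⟨u, hu⟩, fun y hy => ?_⟩
      exact Subtype.ext (dblStar_unique_nbr_u huv huS hvS hs0S hp
        ((Subgraph.coe_adj _ _ _).mp hy))
  -- rotate the cycle to start at s0
  have hd : (w.rotate _ hs0mem).IsCycle := hw.rotate hs0mem
  set d := w.rotate _ hs0mem with hdd
  clear_value d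
  clear hdd hs0tail hnodup hcard hlen hw
  have hdlen : 3 ≤ d.length := hd.three_le_length
  have hnodupE : d.edges.Nodup := hd.edges_nodup
  revert hd hdlen hnodupE
  cases d with
  | nil => exact fun hd _ _ => absurd hd SimpleGraph.Walk.IsCycle.not_of_nil
  | cons hadj q =>
    intro hd hdlen hnodupE
    rename_i b
    have hb : b = nb := hkey b hadj
    subst hb
    -- look at the last edge via the reverse walk
    cases hrev : (SimpleGraph.Walk.cons hadj q).reverse with
    | nil =>
      have := congrArg SimpleGraph.Walk.length hrev
      rw [SimpleGraph.Walk.length_reverse] at this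
      simp at this
    | cons hadj' q' =>
      rename_i b'
      have hb' : b' = b := hkey b' hadj'
      subst hb'
      have hedges := congrArg SimpleGraph.Walk.edges hrev
      rw [SimpleGraph.Walk.edges_reverse] at hedges
      rw [SimpleGraph.Walk.edges_cons, SimpleGraph.Walk.edges_cons] at hedges
      have hqne : q.edges ≠ [] := by
        intro hnil
        have := q.length_edges
        rw [hnil] at this
        simp only [SimpleGraph.Walk.length_cons] at hdlen
        simp at this
        omega
      have hrevne : q.edges.reverse ≠ [] := fun h => hqne (List.reverse_eq_nil_iff.mp h)
      obtain ⟨y, t, hyt⟩ := List.exists_cons_of_ne_nil hrevne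
      rw [List.reverse_cons, hyt, List.cons_append] at hedges
      have hy : y = s(s0, b') := (List.cons_eq_cons.mp hedges).1
      have hmem : s(s0, b') ∈ q.edges := by
        rw [← List.mem_reverse, hyt, hy]
        exact List.mem_cons_self
      rw [SimpleGraph.Walk.edges_cons] at hnodupE
      exact (List.nodup_cons.mp hnodupE).1 hmem

lemma dblStar_isTree : (dblStar S u v huv huS hvS).coe.IsTree :=
  ⟨dblStar_connected huv huS hvS, dblStar_isAcyclic huv huS hvS⟩

end Tree


section Disjoint

lemma starEdges_endpoints {e : Sym2 (V r n)} (he : e ∈ starEdges S u v) :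
    (u ∈ e ∨ v ∈ e) ∧ ∀ a ∈ e, a ∈ (↑S : Set (V r n)) ∪ {u, v} := by
  rcases mem_starEdges.mp he with h | ⟨s, hs, hp, h⟩ | ⟨s, hs, hp, h⟩ <;> subst h
  · refine ⟨Or.inl (Sym2.mem_mk_left _ _), ?_⟩
    intro a ha
    rcases Sym2.mem_iff.mp ha with rfl | rfl
    · exact Or.inr (Or.inl rfl)
    · exact Or.inr (Or.inr rfl)
  · refine ⟨Or.inr (Sym2.mem_mk_left _ _), ?_⟩
    intro a ha
    rcases Sym2.mem_iff.mp ha with rfl | rfl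
    · exact Or.inr (Or.inr rfl)
    · exact Or.inl hs
  · refine ⟨Or.inl (Sym2.mem_mk_left _ _), ?_⟩
    intro a ha
    rcases Sym2.mem_iff.mp ha with rfl | rfl
    · exact Or.inr (Or.inl rfl)
    · exact Or.inl hs

lemma starEdges_disjoint {u' v' : V r n}
    (hu' : u' ∉ S) (hv' : v' ∉ S) (huu : u ≠ u') (huv' : u ≠ v') (hvu : v ≠ u')
    (hvv : v ≠ v') (huS : u ∉ S) (hvS : v ∉ S) :
    Disjoint (starEdges S u v) (starEdges S u' v') := by
  rw [Finset.disjoint_left]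
  intro e he he'
  obtain ⟨hor, -⟩ := starEdges_endpoints (u := u) (v := v) he
  obtain ⟨-, hall⟩ := starEdges_endpoints (u := u') (v := v') he'
  rcases hor with h | h
  · rcases hall u h with hS | h1 | h1
    · exact huS hS
    · exact huu h1
    · exact huv' h1
  · rcases hall v h with hS | h1 | h1
    · exact hvS hS
    · exact hvu h1
    · exact hvv h1

lemma dblStar_verts_inter {u' v' : V r n} (huv : u.1 ≠ v.1) (huS : u ∉ S) (hvS : v ∉ S)
    (hu'v' : u'.1 ≠ v'.1) (hu'S : u' ∉ S) (hv'S : v' ∉ S)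
    (huu : u ≠ u') (huv' : u ≠ v') (hvu : v ≠ u') (hvv : v ≠ v') :
    ((dblStar S u v huv huS hvS).verts ∩ (dblStar S u' v' hu'v' hu'S hv'S).verts)
      = (↑S : Set (V r n)) := by
  apply Set.eq_of_subset_of_subset
  · rintro a ⟨ha1, ha2⟩
    rcases ha1 with h | h | h
    · exact h
    · subst h
      rcases ha2 with h2 | h2 | h2
      · exact absurd h2 huS
      · exact absurd h2 huu
      · exact absurd h2 huv'
    · subst h
      rcases ha2 with h2 | h2 | h2
      · exact absurd h2 hvS
      · exact absurd h2 hvu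
      · exact absurd h2 hvv
  · intro a ha
    exact ⟨Or.inl ha, Or.inl ha⟩

end Disjoint

end RxGraph

namespace RxAsym

lemma exists_good_N (C a b ℓ k : ℕ) (hb : 0 < b) (hab : a < b) (hℓ : 1 ≤ ℓ) :
    ∃ N, 0 < N ∧ ∀ n, N ≤ n → C * n ^ k * a ^ (n / (2 * ℓ)) < b ^ (n / (2 * ℓ)) := by
  have h2ℓ : 0 < 2 * ℓ := by omega
  rcases Nat.eq_zero_or_pos a with rfl | ha
  · refine ⟨2 * ℓ, by omega, fun n hn => ?_⟩
    have hm : 1 ≤ n / (2 * ℓ) := (Nat.le_div_iff_mul_le h2ℓ).mpr (by omega)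
    rw [zero_pow (by omega), mul_zero]
    exact pow_pos hb _
  · -- real-analytic case
    set ρ : ℝ := (a : ℝ) / (b : ℝ) with hρ
    have hb0 : (0 : ℝ) < b := by exact_mod_cast hb
    have hρ0 : 0 < ρ := div_pos (by exact_mod_cast ha) hb0
    have hρ1 : ρ < 1 := (div_lt_one hb0).mpr (by exact_mod_cast hab)
    have htend : Tendsto (fun m : ℕ => (m : ℝ) ^ k * ρ ^ m) atTop (nhds 0) :=
      tendsto_pow_const_mul_const_pow_of_lt_one k hρ0.le hρ1
    have htend1 : Tendsto (fun m : ℕ => ((m + 1 : ℕ) : ℝ) ^ k * ρ ^ (m + 1)) atTop (nhds 0) :=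
      (tendsto_add_atTop_iff_nat 1).mpr htend
    have htend' : Tendsto (fun m : ℕ => ((m + 1 : ℕ) : ℝ) ^ k * ρ ^ m) atTop (nhds 0) := by
      have := htend1.mul_const ρ⁻¹
      rw [zero_mul] at this
      refine this.congr fun m => ?_
      field_simp
      ring
    set D : ℝ := (C : ℝ) * (2 * ℓ : ℕ) ^ k with hD
    have hD0 : 0 ≤ D := by positivity
    have hε : (0 : ℝ) < 1 / (D + 1) := by positivity
    have hev : ∀ᶠ m in atTop, ((m + 1 : ℕ) : ℝ) ^ k * ρ ^ m < 1 / (D + 1) :=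
      htend'.eventually_lt_const hε
    obtain ⟨M, hM⟩ := eventually_atTop.mp hev
    refine ⟨2 * ℓ * M + 2 * ℓ, by omega, fun n hn => ?_⟩
    set m := n / (2 * ℓ) with hm
    have hmM : M ≤ m := by
      apply (Nat.le_div_iff_mul_le h2ℓ).mpr
      rw [Nat.mul_comm]
      exact le_trans (Nat.le_add_right _ _) hn
    have hmod := Nat.mod_lt n h2ℓ
    have hn2 : n < 2 * ℓ * (m + 1) := by
      calc n = 2 * ℓ * m + n % (2 * ℓ) := (Nat.div_add_mod n (2 * ℓ)).symm
        _ < 2 * ℓ * m + 2 * ℓ := Nat.add_lt_add_left hmod _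
        _ = 2 * ℓ * (m + 1) := by ring
    -- move to ℝ
    have hcast : ((n : ℝ)) ≤ ((2 * ℓ * (m + 1) : ℕ) : ℝ) := by exact_mod_cast hn2.le
    have hbm : (0 : ℝ) < (b : ℝ) ^ m := pow_pos hb0 m
    have key : (C : ℝ) * (n : ℝ) ^ k * ρ ^ m < 1 := by
      have h1 : (C : ℝ) * (n : ℝ) ^ k * ρ ^ m
          ≤ (D + 1) * (((m + 1 : ℕ) : ℝ) ^ k * ρ ^ m) := by
        have hnk : (n : ℝ) ^ k ≤ ((2 * ℓ : ℕ) : ℝ) ^ k * ((m + 1 : ℕ) : ℝ) ^ k := by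
          rw [← mul_pow]
          refine pow_le_pow_left₀ (by positivity) ?_ k
          push_cast at hcast ⊢
          linarith
        have hρm : (0 : ℝ) ≤ ρ ^ m := by positivity
        calc (C : ℝ) * (n : ℝ) ^ k * ρ ^ m
            ≤ (C : ℝ) * (((2 * ℓ : ℕ) : ℝ) ^ k * ((m + 1 : ℕ) : ℝ) ^ k) * ρ ^ m := by
              refine mul_le_mul_of_nonneg_right (mul_le_mul_of_nonneg_left hnk (by positivity)) hρm
          _ = D * (((m + 1 : ℕ) : ℝ) ^ k * ρ ^ m) := by rw [hD]; push_cast; ring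
          _ ≤ (D + 1) * (((m + 1 : ℕ) : ℝ) ^ k * ρ ^ m) := by
              refine mul_le_mul_of_nonneg_right (by linarith) (by positivity)
      have h2 : (D + 1) * (((m + 1 : ℕ) : ℝ) ^ k * ρ ^ m) < (D + 1) * (1 / (D + 1)) :=
        mul_lt_mul_of_pos_left (hM m hmM) (by positivity)
      have h3 : (D + 1) * (1 / (D + 1)) = 1 := by field_simp
      linarith
    have final : (C : ℝ) * (n : ℝ) ^ k * (a : ℝ) ^ m < (b : ℝ) ^ m := by
      have haρ : (a : ℝ) = ρ * b := (div_mul_cancel₀ (a : ℝ) hb0.ne').symm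
      rw [haρ, mul_pow]
      calc (C : ℝ) * (n : ℝ) ^ k * (ρ ^ m * (b : ℝ) ^ m)
          = ((C : ℝ) * (n : ℝ) ^ k * ρ ^ m) * (b : ℝ) ^ m := by ring
        _ < 1 * (b : ℝ) ^ m := by exact mul_lt_mul_of_pos_right key hbm
        _ = (b : ℝ) ^ m := one_mul _
    exact_mod_cast final

end RxAsym

open RxCount RxGraph RxAsym Finset

theorem rx_multipartite_le_succ (k ℓ r : ℕ) (hk : 3 ≤ k) (hr : 3 ≤ r) (hℓ : 1 ≤ ℓ) :
    ∃ N : ℕ, 0 < N ∧ ∀ n : ℕ, N ≤ n →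
      rainbowIndex (completeMultipartiteGraph (fun _ : Fin r => Fin n)) k ℓ ≤ k + 1 := by
  classical
  set q : ℕ := k + 1 with hq
  set Q : ℕ := q ^ q with hQdef
  set P : ℕ := Nat.factorial q with hPdef
  have hQpos : 0 < Q := pow_pos (by omega) _
  have hPpos : 0 < P := Nat.factorial_pos q
  have hPQ : P ≤ Q := le_trans (Nat.factorial_le_pow q) le_rfl
  have haQ : Q - P < Q := Nat.sub_lt hQpos hPpos
  obtain ⟨N₀, hN₀pos, hN₀⟩ := exists_good_N (ℓ * r ^ k) (Q - P) Q ℓ k hQpos haQ hℓ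
  refine ⟨max N₀ (2 * ℓ + 2 * k + 2), by positivity, fun n hn => ?_⟩
  have hn₀ : N₀ ≤ n := le_trans (le_max_left _ _) hn
  have hnk : 2 * ℓ + 2 * k + 2 ≤ n := le_trans (le_max_right _ _) hn
  -- basic numerology
  set m : ℕ := n / (2 * ℓ) with hm
  have h2ℓ : 0 < 2 * ℓ := by omega
  have hm1 : 1 ≤ m := (Nat.le_div_iff_mul_le h2ℓ).mpr (by omega)
  have hpool : ℓ * m + k ≤ n := by
    have e1 : m = n / 2 / ℓ := by rw [hm, Nat.div_div_eq_div_mul]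
    have e2 : ℓ * m ≤ n / 2 := by
      rw [e1, Nat.mul_comm]
      exact Nat.div_mul_le_self _ _
    omega
  -- the vertex type
  have hr0 : 0 < r := by omega
  have hr1 : 1 < r := by omega
  set i0 : Fin r := ⟨0, hr0⟩ with hi0
  set i1 : Fin r := ⟨1, hr1⟩ with hi1
  have hi01 : i0 ≠ i1 := by
    intro h
    have := congrArg Fin.val h
    simp [hi0, hi1] at this
  have hcardV : Fintype.card ((i : Fin r) × Fin n) = r * n := by
    simp [Fintype.card_sigma, Finset.sum_const, Finset.card_univ, smul_eq_mul]
  set α := Sym2 ((i : Fin r) × Fin n) with hα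
  have hAcard : q ≤ Fintype.card α := by
    have h1 : Fintype.card ((i : Fin r) × Fin n) ≤ Fintype.card α := by
      apply Fintype.card_le_of_injective (fun a => s(a, a))
      intro a b h
      rw [Sym2.eq_iff] at h
      rcases h with ⟨h, -⟩ | ⟨h, -⟩ <;> exact h
    have h2 : n ≤ r * n := Nat.le_mul_of_pos_left n hr0
    omega
  -- choice of centers
  have hchoice : ∀ S : Finset ((i : Fin r) × Fin n),
      ∃ f : Fin ℓ × Fin m → Fin n, Function.Injective f ∧
        (S.card = k → ∀ p, f p ∉ S.image (fun s => s.2)) := by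
    intro S
    set B : Finset (Fin n) :=
      if S.card = k then S.image (fun s => s.2) else ∅ with hB
    have hBcard : B.card ≤ k := by
      rw [hB]
      split
      · exact le_trans Finset.card_image_le (by omega)
      · simp
    have hsd : ℓ * m ≤ ((univ : Finset (Fin n)) \ B).card := by
      have := Finset.card_sdiff_of_subset (Finset.subset_univ B)
      rw [Finset.card_univ, Fintype.card_fin] at this
      omega
    obtain ⟨Pl, hPlsub, hPlcard⟩ := Finset.exists_subset_card_eq hsd
    refine ⟨fun p => (Pl.equivFin.symm ((finCongr hPlcard.symm) (finProdFinEquiv p)) : _), ?_, ?_⟩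
    · intro p p' h
      have h1 : (Pl.equivFin.symm ((finCongr hPlcard.symm) (finProdFinEquiv p)))
          = (Pl.equivFin.symm ((finCongr hPlcard.symm) (finProdFinEquiv p'))) :=
        Subtype.coe_injective h
      exact finProdFinEquiv.injective
        ((finCongr hPlcard.symm).injective (Pl.equivFin.symm.injective h1))
    · intro hS p hmem
      have hin : ((Pl.equivFin.symm ((finCongr hPlcard.symm) (finProdFinEquiv p))) : Fin n)
          ∈ Pl := (Pl.equivFin.symm _).2
      have := hPlsub hin
      rw [Finset.mem_sdiff] at this
      apply this.2
      rw [hB, if_pos hS]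
      exact hmem
  choose F hFinj hFgood using hchoice
  -- centers
  set uu : Finset ((i : Fin r) × Fin n) → Fin ℓ × Fin m → (i : Fin r) × Fin n :=
    fun S p => ⟨i0, F S p⟩ with huu
  set vv : Finset ((i : Fin r) × Fin n) → Fin ℓ × Fin m → (i : Fin r) × Fin n :=
    fun S p => ⟨i1, F S p⟩ with hvv
  have hfst_uu : ∀ S p, (uu S p).1 = i0 := fun S p => rfl
  have hfst_vv : ∀ S p, (vv S p).1 = i1 := fun S p => rfl
  have huv1 : ∀ S p p', (uu S p).1 ≠ (vv S p').1 := fun S p p' => hi01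
  have huuS : ∀ S, S.card = k → ∀ p, uu S p ∉ S := by
    intro S hS p h
    exact hFgood S hS p (Finset.mem_image_of_mem (fun s => s.2) h)
  have hvvS : ∀ S, S.card = k → ∀ p, vv S p ∉ S := by
    intro S hS p h
    exact hFgood S hS p (Finset.mem_image_of_mem (fun s => s.2) h)
  have huu_ne : ∀ S p p', p ≠ p' → uu S p ≠ uu S p' := by
    intro S p p' hne h
    exact hne (hFinj S (by
      have := congrArg (fun z : (i : Fin r) × Fin n => z.2) h
      simpa using this))
  have hvv_ne : ∀ S p p', p ≠ p' → vv S p ≠ vv S p' := by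
    intro S p p' hne h
    exact hne (hFinj S (by
      have := congrArg (fun z : (i : Fin r) × Fin n => z.2) h
      simpa using this))
  have huv_ne : ∀ S p p', uu S p ≠ vv S p' := by
    intro S p p' h
    exact hi01 (congrArg Sigma.fst h)
  -- edge sets of the candidate double stars
  set Ed : Finset ((i : Fin r) × Fin n) → Fin ℓ → Fin m → Finset α :=
    fun S t j => starEdges S (uu S (t, j)) (vv S (t, j)) with hEd
  -- counting
  set Ω : ℕ := q ^ Fintype.card α with hΩdef
  set R : ℕ := q ^ (Fintype.card α - q) with hRdef
  have hΩQR : Ω = Q * R := by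
    rw [hΩdef, hQdef, hRdef, ← pow_add]
    congr 1
    omega
  have hcardfun : Fintype.card (α → Fin q) = Ω := by
    rw [Fintype.card_fun, Fintype.card_fin, hΩdef]
  have hRpos : 0 < R := pow_pos (by omega) _
  have hΩpos : 0 < Ω := pow_pos (by omega) _
  have hfailcard : ∀ S, S.card = k → ∀ t j,
      (univ.filter fun c : α → Fin q => ¬ Set.InjOn c ↑(Ed S t j)).card = (Q - P) * R := by
    intro S hS t j
    have hEcard : (Ed S t j).card = q := by
      rw [hEd]
      rw [starEdges_card (huv1 S _ _) (huuS S hS _) (hvvS S hS _), hS]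
    have hinj := card_filter_injOn (κ := Fin q) (Ed S t j)
    rw [hEcard, Fintype.card_fin, Nat.descFactorial_self] at hinj
    have hnot : (univ.filter fun c : α → Fin q => ¬ Set.InjOn c ↑(Ed S t j))
        = univ \ (univ.filter fun c : α → Fin q => Set.InjOn c ↑(Ed S t j)) :=
      Finset.filter_not _ _
    rw [hnot, Finset.card_sdiff_of_subset (Finset.filter_subset _ _), Finset.card_univ, hcardfun, hinj]
    rw [hΩQR, hPdef, hRdef, hQdef, Nat.sub_mul]
  have hkey : ∀ S, S.card = k → ∀ t : Fin ℓ,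
      (univ.filter fun c : α → Fin q =>
        ∀ j : Fin m, ¬ Set.InjOn c ↑(Ed S t j)).card * Q ^ m = Ω * (Q - P) ^ m := by
    intro S hS t
    have hloc : ∀ (j : Fin m) (c c' : α → Fin q),
        (∀ e ∈ Ed S t j, c e = c' e) → (¬ Set.InjOn c ↑(Ed S t j)) →
          ¬ Set.InjOn c' ↑(Ed S t j) := by
      intro j c c' hagree hc hc'
      apply hc
      intro e he e' he' hee
      exact hc' he he' (by
        rw [← hagree e (Finset.mem_coe.mp he), ← hagree e' (Finset.mem_coe.mp he')]
        exact hee)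
    have hdisj : ∀ j j' : Fin m, j ≠ j' → Disjoint (Ed S t j) (Ed S t j') := by
      intro j j' hne
      rw [hEd]
      exact starEdges_disjoint (huuS S hS _) (hvvS S hS _)
        (huu_ne S _ _ (by simp [hne]) ) (huv_ne S _ _)
        (fun h => (huv_ne S _ _) h.symm) (hvv_ne S _ _ (by simp [hne]))
        (huuS S hS _) (hvvS S hS _)
    have hmul := card_filter_forall_mul
      (A := fun j (c : α → Fin q) => ¬ Set.InjOn c ↑(Ed S t j)) (E := fun j => Ed S t j)
      hloc hdisj
    rw [hcardfun] at hmul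
    have hprod : ∏ j : Fin m,
        (univ.filter fun c : α → Fin q => ¬ Set.InjOn c ↑(Ed S t j)).card
          = ((Q - P) * R) ^ m := by
      rw [Finset.prod_congr rfl (fun j _ => hfailcard S hS t j)]
      rw [Finset.prod_const, Finset.card_univ, Fintype.card_fin]
    rw [hprod] at hmul
    apply Nat.eq_of_mul_eq_mul_right (pow_pos hRpos m)
    calc (univ.filter fun c : α → Fin q =>
          ∀ j : Fin m, ¬ Set.InjOn c ↑(Ed S t j)).card * Q ^ m * R ^ m
        = (univ.filter fun c : α → Fin q =>
            ∀ j : Fin m, ¬ Set.InjOn c ↑(Ed S t j)).card * Ω ^ m := by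
          rw [hΩQR, mul_pow]; ring
      _ = Ω * ((Q - P) * R) ^ m := hmul
      _ = Ω * (Q - P) ^ m * R ^ m := by rw [mul_pow]; ring
  -- union bound
  set Bad : Finset (α → Fin q) :=
    (univ.filter fun S : Finset ((i : Fin r) × Fin n) => S.card = k).biUnion
      (fun S => (univ : Finset (Fin ℓ)).biUnion
        (fun t => univ.filter fun c : α → Fin q =>
          ∀ j : Fin m, ¬ Set.InjOn c ↑(Ed S t j))) with hBad
  have hNS : (univ.filter fun S : Finset ((i : Fin r) × Fin n) => S.card = k).card
      ≤ (r * n) ^ k := by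
    have hsub : (univ.filter fun S : Finset ((i : Fin r) × Fin n) => S.card = k)
        ⊆ Finset.powersetCard k univ := by
      intro S hS
      rw [Finset.mem_powersetCard]
      exact ⟨Finset.subset_univ _, (Finset.mem_filter.mp hS).2⟩
    calc (univ.filter fun S : Finset ((i : Fin r) × Fin n) => S.card = k).card
        ≤ (Finset.powersetCard k (univ : Finset ((i : Fin r) × Fin n))).card :=
          Finset.card_le_card hsub
      _ = (Fintype.card ((i : Fin r) × Fin n)).choose k := by
          rw [Finset.card_powersetCard, Finset.card_univ]
      _ = (r * n).choose k := by rw [hcardV]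
      _ ≤ (r * n) ^ k := Nat.choose_le_pow _ _
  have hBadlt : Bad.card < Ω := by
    apply Nat.lt_of_mul_lt_mul_right (a := Q ^ m)
    have h1 : Bad.card ≤ ∑ S ∈ (univ.filter fun S : Finset ((i : Fin r) × Fin n) =>
        S.card = k), ∑ t : Fin ℓ,
          (univ.filter fun c : α → Fin q =>
            ∀ j : Fin m, ¬ Set.InjOn c ↑(Ed S t j)).card := by
      refine le_trans (Finset.card_biUnion_le) ?_
      refine Finset.sum_le_sum ?_
      intro S _
      exact Finset.card_biUnion_le
    have h2 : Bad.card * Q ^ m ≤ (univ.filter fun S : Finset ((i : Fin r) × Fin n) =>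
        S.card = k).card * (ℓ * (Ω * (Q - P) ^ m)) := by
      calc Bad.card * Q ^ m
          ≤ (∑ S ∈ (univ.filter fun S : Finset ((i : Fin r) × Fin n) => S.card = k),
              ∑ t : Fin ℓ, (univ.filter fun c : α → Fin q =>
                ∀ j : Fin m, ¬ Set.InjOn c ↑(Ed S t j)).card) * Q ^ m :=
            Nat.mul_le_mul_right _ h1
        _ = ∑ S ∈ (univ.filter fun S : Finset ((i : Fin r) × Fin n) => S.card = k),
              ∑ t : Fin ℓ, ((univ.filter fun c : α → Fin q =>
                ∀ j : Fin m, ¬ Set.InjOn c ↑(Ed S t j)).card * Q ^ m) := by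
            rw [Finset.sum_mul]
            refine Finset.sum_congr rfl fun S _ => ?_
            rw [Finset.sum_mul]
        _ = ∑ S ∈ (univ.filter fun S : Finset ((i : Fin r) × Fin n) => S.card = k),
              ∑ t : Fin ℓ, Ω * (Q - P) ^ m := by
            refine Finset.sum_congr rfl fun S hS => ?_
            refine Finset.sum_congr rfl fun t _ => ?_
            exact hkey S (Finset.mem_filter.mp hS).2 t
        _ = (univ.filter fun S : Finset ((i : Fin r) × Fin n) => S.card = k).card *
              (ℓ * (Ω * (Q - P) ^ m)) := by
            simp only [Finset.sum_const, Finset.card_univ, Fintype.card_fin, smul_eq_mul]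
    have h3 : (univ.filter fun S : Finset ((i : Fin r) × Fin n) => S.card = k).card *
        (ℓ * (Ω * (Q - P) ^ m)) < Ω * Q ^ m := by
      have h4 : (univ.filter fun S : Finset ((i : Fin r) × Fin n) => S.card = k).card *
          (ℓ * (Ω * (Q - P) ^ m)) ≤ ((ℓ * r ^ k) * n ^ k * (Q - P) ^ m) * Ω := by
        calc (univ.filter fun S : Finset ((i : Fin r) × Fin n) => S.card = k).card *
            (ℓ * (Ω * (Q - P) ^ m))
            ≤ (r * n) ^ k * (ℓ * (Ω * (Q - P) ^ m)) :=
              Nat.mul_le_mul_right _ hNS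
          _ = ((ℓ * r ^ k) * n ^ k * (Q - P) ^ m) * Ω := by rw [mul_pow]; ring
      have h5 : ((ℓ * r ^ k) * n ^ k * (Q - P) ^ m) * Ω < Q ^ m * Ω := by
        exact Nat.mul_lt_mul_of_lt_of_le (hN₀ n hn₀) le_rfl hΩpos
      calc (univ.filter fun S : Finset ((i : Fin r) × Fin n) => S.card = k).card *
          (ℓ * (Ω * (Q - P) ^ m)) ≤ ((ℓ * r ^ k) * n ^ k * (Q - P) ^ m) * Ω := h4
        _ < Q ^ m * Ω := h5
        _ = Ω * Q ^ m := mul_comm _ _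
    exact lt_of_le_of_lt h2 h3
  -- a good coloring exists
  have hex : ∃ c : α → Fin q, c ∉ Bad := by
    by_contra h
    push_neg at h
    have hsub : (univ : Finset (α → Fin q)) ⊆ Bad := fun c _ => h c
    have := Finset.card_le_card hsub
    rw [Finset.card_univ, hcardfun] at this
    omega
  obtain ⟨c, hc⟩ := hex
  have hgood : ∀ S : Finset ((i : Fin r) × Fin n), S.card = k → ∀ t : Fin ℓ,
      ∃ j : Fin m, Set.InjOn c ↑(Ed S t j) := by
    intro S hS t
    by_contra h
    push_neg at h
    apply hc
    rw [hBad, Finset.mem_biUnion]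
    refine ⟨S, Finset.mem_filter.mpr ⟨Finset.mem_univ _, hS⟩, ?_⟩
    rw [Finset.mem_biUnion]
    refine ⟨t, Finset.mem_univ _, ?_⟩
    rw [Finset.mem_filter]
    exact ⟨Finset.mem_univ _, h⟩
  -- conclude
  apply Nat.sInf_le
  refine ⟨c, ?_⟩
  intro S hS
  choose j hj using hgood S hS
  refine ⟨fun t => dblStar S (uu S (t, j t)) (vv S (t, j t)) (huv1 S _ _)
    (huuS S hS _) (hvvS S hS _), ?_, ?_⟩
  · intro t
    refine ⟨?_, dblStar_isTree _ _ _, ?_⟩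
    · intro a ha
      exact Or.inl ha
    · rw [dblStar_edgeSet]
      exact hj t
  · intro t t' htt
    have hptt : ((t, j t) : Fin ℓ × Fin m) ≠ (t', j t') := by
      intro h
      exact htt (congrArg Prod.fst h)
    constructor
    · rw [dblStar_edgeSet, dblStar_edgeSet, ← Finset.coe_inter,
        Finset.disjoint_iff_inter_eq_empty.mp
          (starEdges_disjoint (huuS S hS _) (hvvS S hS _) (huu_ne S _ _ hptt)
            (huv_ne S _ _) (fun h => (huv_ne S _ _) h.symm) (hvv_ne S _ _ hptt)
            (huuS S hS _) (hvvS S hS _)),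
        Finset.coe_empty]
    · exact dblStar_verts_inter (huv1 S _ _) (huuS S hS _) (hvvS S hS _)
        (huv1 S _ _) (huuS S hS _) (hvvS S hS _) (huu_ne S _ _ hptt)
        (huv_ne S _ _) (fun h => (huv_ne S _ _) h.symm) (hvv_ne S _ _ hptt)
end
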